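/- Let (X,W) and (X̃,W) be two ergodic joinings of countable-valued ℤ-processes X, X̃ with a ℤ-process W. Suppose there exists a sequence (π_i, π̃_i)_{i≥1} of finitary partial isomorphisms of X and X̃ relative to W, each extending the previous one, such that the uncertainties of π_i(X,W) and of π̃_i(X̃,W) both tend to 0 as i → ∞. Then X and X̃ are finitarily isomorphic relative to W. -/

import Mathlib

open MeasureTheory ProbabilityTheory Filter
open scoped ENNReal

namespace ZP

noncomputable section

instance optionMeasurableSpace {A : Type*} : MeasurableSpace (Option A) := ⊤

instance optionDiscrete {A : Type*} : DiscreteMeasurableSpace (Option A) :=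
  inferInstanceAs (@DiscreteMeasurableSpace (Option A) ⊤)

def zshift {A : Type*} (x : ℤ → A) : ℤ → A := fun n => x (n + 1)

def IsStationary {A : Type*} [MeasurableSpace A] (μ : Measure (ℤ → A)) : Prop :=
  Measure.map zshift μ = μ

def windowSigma (A : Type*) [m : MeasurableSpace A] (n : ℕ) : MeasurableSpace (ℤ → A) :=
  ⨆ i ∈ Finset.Icc (-(n : ℤ)) (n : ℤ), MeasurableSpace.comap (fun x : ℤ → A => x i) m

def StopFinitary {A B : Type*} [MeasurableSpace A] [MeasurableSpace B]
    (ν : Measure (ℤ → B)) (φ : (ℤ → B) → ℤ → A) : Prop :=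
  ∃ τ : (ℤ → B) → ℕ∞,
    (∀ n : ℕ, MeasurableSet[windowSigma B n] {y | τ y ≤ (n : ℕ∞)}) ∧
    ν {y | τ y = ⊤} = 0 ∧
    ∀ s : Set A, MeasurableSet s → ∀ n : ℕ,
      MeasurableSet[windowSigma B n] ({y | φ y 0 ∈ s} ∩ {y | τ y ≤ (n : ℕ∞)})

def FactorMap {A B : Type*} [MeasurableSpace A] [MeasurableSpace B] (ν : Measure (ℤ → B))
    (μ : Measure (ℤ → A)) (φ : (ℤ → B) → ℤ → A) : Prop :=
  Measurable φ ∧ (∀ᵐ y ∂ν, φ (zshift y) = zshift (φ y)) ∧ ν.map φ = μ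

def FinitaryFactorMap {A B : Type*} [MeasurableSpace A] [MeasurableSpace B] (ν : Measure (ℤ → B))
    (μ : Measure (ℤ → A)) (φ : (ℤ → B) → ℤ → A) : Prop :=
  FactorMap ν μ φ ∧ StopFinitary ν φ

def FinitarilyIsomorphic {A B : Type*} [MeasurableSpace A] [MeasurableSpace B]
    (μ : Measure (ℤ → A)) (ν : Measure (ℤ → B)) : Prop :=
  ∃ φ ψ, FinitaryFactorMap μ ν φ ∧ FinitaryFactorMap ν μ ψ ∧
    (∀ᵐ x ∂μ, ψ (φ x) = x) ∧ (∀ᵐ y ∂ν, φ (ψ y) = y)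

def H {Ω S : Type*} [MeasurableSpace Ω] (μ : Measure Ω) (X : Ω → S) : ℝ≥0∞ :=
  ∑' s : S, ENNReal.ofReal (Real.negMulLog (μ (X ⁻¹' {s})).toReal)

def blockRV {A : Type*} (n : ℕ) (x : ℤ → A) : Fin n → A := fun i => x ((i : ℤ) + 1)

def ksEntropyAux {A : Type*} [MeasurableSpace A] (μ : Measure (ℤ → A)) : ℝ≥0∞ :=
  ⨅ n : ℕ, H μ (blockRV (n + 1)) / (n + 1 : ℝ≥0∞)

def ksEntropy {A : Type*} [MeasurableSpace A] (μ : Measure (ℤ → A)) : ℝ≥0∞ :=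
  ⨆ (φ : (ℤ → A) → ℤ → ℕ) (_ : Measurable φ)
    (_ : ∀ᵐ x ∂μ, φ (zshift x) = zshift (φ x)) (_ : H (μ.map φ) (fun y => y 0) ≠ ⊤),
    ksEntropyAux (μ.map φ)

def IsIID {A : Type*} [MeasurableSpace A] (μ : Measure (ℤ → A)) : Prop :=
  iIndepFun (fun i : ℤ => fun x : ℤ → A => x i) μ ∧
  ∀ i j : ℤ, μ.map (fun x => x i) = μ.map (fun x => x j)

def KDependent {A : Type*} [MeasurableSpace A] (k : ℕ) (μ : Measure (ℤ → A)) : Prop :=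
  ∀ S T : Set ℤ, (∀ a ∈ S, ∀ b ∈ T, (k : ℤ) < |a - b|) →
    IndepFun (fun x : ℤ → A => S.restrict x) (fun x : ℤ → A => T.restrict x) μ

def Aperiodic {A : Type*} [MeasurableSpace A] (μ : Measure (ℤ → A)) : Prop :=
  ∀ᵐ x ∂μ, ∀ p : ℕ, 0 < p → ∃ n : ℤ, x (n + p) ≠ x n

/-! ### Pair (joint) processes -/

def seqFst {A B : Type*} (ω : ℤ → A × B) : ℤ → A := fun i => (ω i).1

def seqSnd {A B : Type*} (ω : ℤ → A × B) : ℤ → B := fun i => (ω i).2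

/-- The joint process `μ` on the alphabet `C × B` is an independent product of an i.i.d.
process (the first component) with the process `w` (the second component). -/
def IsIIDProdOf {C B : Type*} [MeasurableSpace C] [MeasurableSpace B]
    (μ : Measure (ℤ → C × B)) (w : Measure (ℤ → B)) : Prop :=
  IsIID (μ.map seqFst) ∧ μ.map (fun ω => (seqFst ω, seqSnd ω)) = (μ.map seqFst).prod w

/-- A finitary isomorphism between two joint processes which fixes the second (the `W`-)
component. -/
def RelFinitaryIso {A A' B : Type*} [MeasurableSpace A] [MeasurableSpace A'] [MeasurableSpace B]
    (μ : Measure (ℤ → A × B)) (ν : Measure (ℤ → A' × B)) : Prop :=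
  ∃ π π', FinitaryFactorMap μ ν π ∧ FinitaryFactorMap ν μ π' ∧
    (∀ᵐ ω ∂μ, seqSnd (π ω) = seqSnd ω ∧ π' (π ω) = ω) ∧
    (∀ᵐ ω' ∂ν, seqSnd (π' ω') = seqSnd ω' ∧ π (π' ω') = ω')

/-! ### Conditional information, entropy -/

def condInfo {α S β : Type*} [MeasurableSpace α] [MeasurableSpace S] [StandardBorelSpace S]
    [Nonempty S] [MeasurableSpace β] (μ : Measure α) [IsFiniteMeasure μ]
    (U : α → S) (V : α → β) (ω : α) : ℝ :=
  -Real.log ((condDistrib U V μ (V ω)) {U ω}).toReal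

def condH {α S β : Type*} [MeasurableSpace α] [MeasurableSpace S] [StandardBorelSpace S]
    [Nonempty S] [MeasurableSpace β] (μ : Measure α) [IsFiniteMeasure μ]
    (U : α → S) (V : α → β) : ℝ≥0∞ :=
  ∫⁻ ω, ENNReal.ofReal (condInfo μ U V ω) ∂μ

/-- Conditional Kolmogorov–Sinai entropy `h(ξ | η) = lim_n H(ξ_{[1,n]} | η)/n`
(for stationary processes the limit equals the infimum). -/
def condKS {E C D : Type*} [MeasurableSpace E] [MeasurableSpace C] [StandardBorelSpace C]
    [Nonempty C] [MeasurableSpace D] (μ : Measure (ℤ → E)) [IsFiniteMeasure μ]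
    (ξ : (ℤ → E) → ℤ → C) (η : (ℤ → E) → ℤ → D) : ℝ≥0∞ :=
  ⨅ n : ℕ, condH μ (fun ω => blockRV (n + 1) (ξ ω)) η / (n + 1 : ℝ≥0∞)

/-! ### Relative finitary dependence -/

open Classical in
/-- The restriction `x_S` of `x` to a (possibly random) subset `S ⊆ ℤ`, encoded with `none`
outside of `S`. -/
def mask {C : Type*} (S : Set ℤ) (x : ℤ → C) : ℤ → Option C :=
  fun i => if i ∈ S then some (x i) else none

/-- `ξ` is `K`-dependent relative to `η`: almost surely, `ξ_S` and `ξ_T` are conditionally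
independent given `η` for any (η-measurably chosen) `S, T ⊆ ℤ` with
`|a-b| > max {K_a, K_b}` for all `a ∈ S`, `b ∈ T`. -/
def RelKDependent {E C D : Type*} [MeasurableSpace E] [StandardBorelSpace (ℤ → E)]
    [MeasurableSpace C] [MeasurableSpace D]
    (μ : Measure (ℤ → E)) [IsFiniteMeasure μ]
    (ξ : (ℤ → E) → ℤ → C) (η : (ℤ → E) → ℤ → D) (hη : Measurable η)
    (K : (ℤ → D) → ℤ → ℕ) : Prop :=
  ∀ S T : (ℤ → D) → Set ℤ,
    (∀ i, MeasurableSet {w : ℤ → D | i ∈ S w}) →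
    (∀ i, MeasurableSet {w : ℤ → D | i ∈ T w}) →
    (∀ᵐ ω ∂μ, ∀ a ∈ S (η ω), ∀ b ∈ T (η ω),
        ((max (K (η ω) a) (K (η ω) b) : ℕ) : ℤ) < |a - b|) →
    CondIndepFun (MeasurableSpace.comap η inferInstance) hη.comap_le
      (fun ω => mask (S (η ω)) (ξ ω)) (fun ω => mask (T (η ω)) (ξ ω)) μ

/-- The block `ξ_{[n-m, n+m]}` of the process `ξ`. -/
def blockAt {E C : Type*} (ξ : (ℤ → E) → ℤ → C) (m : ℕ) (n : ℤ) (ω : ℤ → E) :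
    Fin (2 * m + 1) → C :=
  fun j => ξ ω (n - (m : ℤ) + (j : ℤ))

/-- The process of conditional laws `(𝓛(ξ_{[n-m,n+m]} | η))_{n ∈ ℤ}` is a stop-finitary factor
of `η`, for every `m`. -/
def FinCondLaws {E C D : Type*} [MeasurableSpace E] [MeasurableSpace C] [StandardBorelSpace C]
    [Nonempty C] [MeasurableSpace D] (μ : Measure (ℤ → E)) [IsFiniteMeasure μ]
    (ξ : (ℤ → E) → ℤ → C) (η : (ℤ → E) → ℤ → D) : Prop :=
  ∀ m : ℕ, ∃ ψ : (ℤ → D) → ℤ → Measure (Fin (2 * m + 1) → C),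
    Measurable ψ ∧ (∀ᵐ w ∂(μ.map η), ψ (zshift w) = zshift (ψ w)) ∧
    StopFinitary (μ.map η) ψ ∧
    ∀ n : ℤ, ∀ᵐ ω ∂μ, ψ (η ω) n = condDistrib (blockAt ξ m n) η μ (η ω)

/-- `ξ` is finitarily dependent relative to `η` (under the ambient joint law `μ`):
it is finitarily `K`-dependent relative to `η` for some `ℕ`-valued process `K` which is a
stop-finitary factor of `η`. -/
def RelFinitarilyDependent {E C D : Type*} [MeasurableSpace E] [StandardBorelSpace (ℤ → E)]
    [MeasurableSpace C] [StandardBorelSpace C] [Nonempty C] [MeasurableSpace D]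
    (μ : Measure (ℤ → E)) [IsFiniteMeasure μ]
    (ξ : (ℤ → E) → ℤ → C) (η : (ℤ → E) → ℤ → D) : Prop :=
  ∃ (hη : Measurable η) (K : (ℤ → D) → ℤ → ℕ),
    Measurable K ∧ (∀ᵐ w ∂(μ.map η), K (zshift w) = zshift (K w)) ∧
    StopFinitary (μ.map η) K ∧ RelKDependent μ ξ η hη K ∧ FinCondLaws μ ξ η

/-- `X` (the first component of the joint process `μ`) is finitarily pro-dependent relative to
`W` (the second component): there is a sequence of partial processes, each a finitary factor of
`(W, X)`, increasing to `X`, with the `n`-th one finitarily dependent relative to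
`(W, X⁽¹⁾, …, X⁽ⁿ⁻¹⁾)`. -/
def RelProDependent {A B : Type*} [MeasurableSpace A] [Countable A] [DiscreteMeasurableSpace A]
    [MeasurableSpace B] [StandardBorelSpace B]
    (μ : Measure (ℤ → A × B)) [IsFiniteMeasure μ] : Prop :=
  ∃ φ : ℕ → ((ℤ → A × B) → ℤ → Option A),
    (∀ n, Measurable (φ n) ∧ (∀ᵐ ω ∂μ, φ n (zshift ω) = zshift (φ n ω)) ∧ StopFinitary μ (φ n)) ∧
    (∀ n, ∀ᵐ ω ∂μ, ∀ i a, φ n ω i = some a → (ω i).1 = a) ∧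
    (∀ n, ∀ᵐ ω ∂μ, ∀ i, φ n ω i ≠ none → φ (n + 1) ω i = φ n ω i) ∧
    (∀ᵐ ω ∂μ, ∀ i, ∃ n, φ n ω i = some ((ω i).1)) ∧
    ∀ n, RelFinitarilyDependent μ (φ n)
      (fun ω => fun i => ((ω i).2, fun j : Fin n => φ j ω i))

/-! ### Marker processes -/

/-- A non-trivial `{0,1}`-valued process (the occurrence probability is in `(0,1)`). -/
def NontrivialMarker (ν : Measure (ℤ → Bool)) : Prop :=
  0 < ν {w | w 0 = true} ∧ ν {w | w 0 = true} < 1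

/-- The restriction of the `X`-component of a joint configuration to `(-∞, m]`. -/
def leftRV {A : Type*} (m : ℤ) (ω : ℤ → A × Bool) : {i : ℤ // i ≤ m} → A :=
  fun i => (ω i).1

/-- The restriction of the `X`-component of a joint configuration to `[m, ∞)`. -/
def rightRV {A : Type*} (m : ℤ) (ω : ℤ → A × Bool) : {i : ℤ // m ≤ i} → A :=
  fun i => (ω i).1

/-- The restriction of the marker component to `(-∞, 0]`. -/
def markerLeft {A : Type*} (ω : ℤ → A × Bool) : {i : ℤ // i ≤ (0 : ℤ)} → Bool :=
  fun i => (ω i).2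

/-- The restriction of the marker component to `[0, ∞)`. -/
def markerRight {A : Type*} (ω : ℤ → A × Bool) : {i : ℤ // (0 : ℤ) ≤ i} → Bool :=
  fun i => (ω i).2

/-- The second component of the joint law `μ` is a *good marker process* for the first:
it is a marker process for `X` (a non-trivial `{0,1}`-valued finitary factor of `X`) and there
is `m ≥ 1` such that, a.s. on the event `M₀ = 1`, the tails `X_{(-∞,-m]}` and `X_{[m,∞)}` are
conditionally independent given `M`, with conditional distributions depending only on
`M_{(-∞,0]}` and `M_{[0,∞)}` respectively. -/
def GoodMarker {A : Type*} [MeasurableSpace A] (μ : Measure (ℤ → A × Bool)) : Prop :=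
  (∃ φM : (ℤ → A) → ℤ → Bool,
    FinitaryFactorMap (μ.map seqFst) (μ.map seqSnd) φM ∧
    ∀ᵐ ω ∂μ, φM (seqFst ω) = seqSnd ω) ∧
  NontrivialMarker (μ.map seqSnd) ∧
  ∃ m : ℕ, 1 ≤ m ∧
    ∀ (U : Set ({i : ℤ // i ≤ -(m : ℤ)} → A)) (V : Set ({i : ℤ // (m : ℤ) ≤ i} → A)),
      MeasurableSet U → MeasurableSet V →
      ∀ᵐ ω ∂μ, (ω 0).2 = true →
        (μ[Set.indicator (leftRV (-(m : ℤ)) ⁻¹' U ∩ rightRV (m : ℤ) ⁻¹' V)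
            (fun _ => (1 : ℝ)) | MeasurableSpace.comap seqSnd inferInstance]) ω
        = (μ[Set.indicator (leftRV (-(m : ℤ)) ⁻¹' U)
              (fun _ => (1 : ℝ)) | MeasurableSpace.comap markerLeft inferInstance]) ω
          * (μ[Set.indicator (rightRV (m : ℤ) ⁻¹' V)
              (fun _ => (1 : ℝ)) | MeasurableSpace.comap markerRight inferInstance]) ω

/-- The first occurrence of the marker at or before `n` (the left endpoint of the marker block
of `n`). -/
def blockStart (w : ℤ → Bool) (n : ℤ) : ℤ := sSup {k : ℤ | k ≤ n ∧ w k = true}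

/-- The first occurrence of the marker strictly after `n` (past the marker block of `n`). -/
def blockEnd (w : ℤ → Bool) (n : ℤ) : ℤ := sInf {k : ℤ | n < k ∧ w k = true}

/-- The interval `I^M_n` of the partition of `ℤ` induced by the occurrences of the marker `w`
(each occurrence starts the interval to its right). -/
def blockInterval (w : ℤ → Bool) (n : ℤ) : Set ℤ := Set.Ico (blockStart w n) (blockEnd w n)

/-- `ξ` is `M`-block-dependent relative to `η` (where `M = φM ∘ η` is a marker factor of `η`):
`ξ_{I^M_0}` and `ξ_{ℤ ∖ I^M_0}` are conditionally independent given `η`. -/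
def MBlockDependent {E C D : Type*} [MeasurableSpace E] [StandardBorelSpace (ℤ → E)]
    [MeasurableSpace C] [MeasurableSpace D] (μ : Measure (ℤ → E)) [IsFiniteMeasure μ]
    (ξ : (ℤ → E) → ℤ → C) (η : (ℤ → E) → ℤ → D) (hη : Measurable η)
    (φM : (ℤ → D) → ℤ → Bool) : Prop :=
  CondIndepFun (MeasurableSpace.comap η inferInstance) hη.comap_le
    (fun ω => mask (blockInterval (φM (η ω)) 0) (ξ ω))
    (fun ω => mask (blockInterval (φM (η ω)) 0)ᶜ (ξ ω)) μ


/-- A partial isomorphism `(π, π')` of the `X`- and `X̃`-components of the joint processes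
`μ = 𝓛(X, W)` and `ν = 𝓛(X̃, W)` relative to the common `W`-component: a pair of equivariant
measurable maps such that, under some joining relative to `W`, `π(X, W)` is a partial process
of `X̃` and `π'(X̃, W)` is a partial process of `X`. -/
def PartialIso {A A' B : Type*} [MeasurableSpace A] [MeasurableSpace A'] [MeasurableSpace B]
    (μ : Measure (ℤ → A × B)) (ν : Measure (ℤ → A' × B))
    (π : (ℤ → A × B) → ℤ → Option A') (π' : (ℤ → A' × B) → ℤ → Option A) : Prop :=
  Measurable π ∧ Measurable π' ∧
  (∀ᵐ ω ∂μ, π (zshift ω) = zshift (π ω)) ∧ (∀ᵐ ω ∂ν, π' (zshift ω) = zshift (π' ω)) ∧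
  ∃ ρ : Measure (ℤ → (A × A') × B), IsProbabilityMeasure ρ ∧
    ρ.map (fun ω => fun i => (((ω i).1).1, (ω i).2)) = μ ∧
    ρ.map (fun ω => fun i => (((ω i).1).2, (ω i).2)) = ν ∧
    (∀ᵐ ω ∂ρ, ∀ (i : ℤ) (a : A'),
      π (fun j => (((ω j).1).1, (ω j).2)) i = some a → ((ω i).1).2 = a) ∧
    (∀ᵐ ω ∂ρ, ∀ (i : ℤ) (a : A),
      π' (fun j => (((ω j).1).2, (ω j).2)) i = some a → ((ω i).1).1 = a)

/-! ### Auxiliary: shifts -/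

def shiftBy {E : Type*} (n : ℤ) (x : ℤ → E) : ℤ → E := fun k => x (k + n)

theorem shiftBy_zero {E : Type*} (x : ℤ → E) : shiftBy 0 x = x := by
  funext k; simp [shiftBy]

theorem shiftBy_shiftBy {E : Type*} (n m : ℤ) (x : ℤ → E) :
    shiftBy n (shiftBy m x) = shiftBy (n + m) x := by
  funext k; simp [shiftBy, add_assoc]

theorem zshift_eq_shiftBy {E : Type*} (x : ℤ → E) : zshift x = shiftBy 1 x := rfl

theorem measurable_shiftBy {E : Type*} [MeasurableSpace E] (n : ℤ) :
    Measurable (shiftBy (E := E) n) :=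
  measurable_pi_lambda _ fun k => measurable_pi_apply (k + n)

theorem measurable_zshift {E : Type*} [MeasurableSpace E] :
    Measurable (zshift (A := E)) :=
  measurable_pi_lambda _ fun k => measurable_pi_apply (k + 1)

theorem map_shiftBy {E : Type*} [MeasurableSpace E] {μ : Measure (ℤ → E)}
    (h : Measure.map zshift μ = μ) (n : ℤ) : Measure.map (shiftBy n) μ = μ := by
  have hneg : Measure.map (shiftBy (-1)) μ = μ := by
    conv_lhs => rw [← h]
    rw [Measure.map_map (measurable_shiftBy _) measurable_zshift]
    have : (shiftBy (E := E) (-1)) ∘ zshift = id := by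
      funext x; funext k; simp [shiftBy, zshift]
    rw [this, Measure.map_id]
  have hsucc : ∀ m : ℤ, Measure.map (shiftBy m) μ = μ → Measure.map (shiftBy (m + 1)) μ = μ := by
    intro m hm
    have : (shiftBy (E := E) (m + 1)) = shiftBy m ∘ zshift := by
      funext x; rw [Function.comp_apply, zshift_eq_shiftBy, shiftBy_shiftBy, add_comm]
    rw [this, ← Measure.map_map (measurable_shiftBy _) measurable_zshift, h, hm]
  have hpred : ∀ m : ℤ, Measure.map (shiftBy m) μ = μ → Measure.map (shiftBy (m - 1)) μ = μ := by
    intro m hm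
    have : (shiftBy (E := E) (m - 1)) = shiftBy m ∘ shiftBy (-1) := by
      funext x; rw [Function.comp_apply, shiftBy_shiftBy]; ring_nf
    rw [this, ← Measure.map_map (measurable_shiftBy _) (measurable_shiftBy _), hneg, hm]
  induction n using Int.induction_on with
  | zero => rw [show shiftBy (E := E) 0 = id from funext fun x => shiftBy_zero x, Measure.map_id]
  | succ m ih => exact hsucc m ih
  | pred m ih => exact hpred (-m) ih

theorem ae_shiftBy {E : Type*} [MeasurableSpace E] {μ : Measure (ℤ → E)}
    (h : Measure.map zshift μ = μ) (n : ℤ) {p : (ℤ → E) → Prop}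
    (hp : ∀ᵐ ω ∂μ, p ω) : ∀ᵐ ω ∂μ, p (shiftBy n ω) := by
  refine ae_of_ae_map (measurable_shiftBy n).aemeasurable ?_
  rwa [map_shiftBy h n]

/-- measure of a shift-defined event is shift invariant -/
theorem measure_shiftBy_preimage {E : Type*} [MeasurableSpace E] {μ : Measure (ℤ → E)}
    (h : Measure.map zshift μ = μ) (n : ℤ) {S : Set (ℤ → E)} (hS : MeasurableSet S) :
    μ (shiftBy n ⁻¹' S) = μ S := by
  conv_rhs => rw [← map_shiftBy h n]
  rw [Measure.map_apply (measurable_shiftBy n) hS]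
/-! ### windowSigma lemmas -/

theorem windowSigma_le_pi {E : Type*} [MeasurableSpace E] (n : ℕ) :
    windowSigma E n ≤ MeasurableSpace.pi := by
  refine iSup_le fun i => iSup_le fun _ => ?_
  exact MeasurableSpace.comap_le_iff_le_map.mpr fun s hs => (measurable_pi_apply i) hs

theorem windowSigma_mono {E : Type*} [MeasurableSpace E] {n m : ℕ} (h : n ≤ m) :
    windowSigma E n ≤ windowSigma E m := by
  refine iSup_le fun i => iSup_le fun hi => ?_
  refine le_iSup_of_le i (le_iSup_of_le ?_ le_rfl)
  simp only [Finset.mem_Icc] at hi ⊢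
  omega

theorem comap_eval_le_windowSigma {E : Type*} [MeasurableSpace E] (n : ℕ) (i : ℤ)
    (hi : -(n : ℤ) ≤ i ∧ i ≤ n) :
    MeasurableSpace.comap (fun x : ℤ → E => x i) ‹MeasurableSpace E› ≤ windowSigma E n :=
  le_iSup_of_le i (le_iSup_of_le (Finset.mem_Icc.mpr hi) le_rfl)

theorem eval_window {E : Type*} [MeasurableSpace E] (n : ℕ) {t : Set E}
    (ht : MeasurableSet t) :
    MeasurableSet[windowSigma E n] ((fun x : ℤ → E => x 0) ⁻¹' t) :=
  comap_eval_le_windowSigma n 0 (by constructor <;> omega) _ ⟨t, ht, rfl⟩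

/-- windowSigma-`n` sets only depend on coordinates in `[-n, n]`. -/
theorem windowSigma_local {E : Type*} [MeasurableSpace E] {n : ℕ} {S : Set (ℤ → E)}
    (hS : MeasurableSet[windowSigma E n] S) :
    ∀ x y : ℤ → E, (∀ k : ℤ, -(n:ℤ) ≤ k → k ≤ n → x k = y k) → (x ∈ S ↔ y ∈ S) := by
  let m' : MeasurableSpace (ℤ → E) :=
    { MeasurableSet' := fun S =>
        ∀ x y : ℤ → E, (∀ k : ℤ, -(n:ℤ) ≤ k → k ≤ n → x k = y k) → (x ∈ S ↔ y ∈ S)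
      measurableSet_empty := fun _ _ _ => Iff.rfl
      measurableSet_compl := fun S hS x y hxy => by
        simp only [Set.mem_compl_iff]; exact not_congr (hS x y hxy)
      measurableSet_iUnion := fun f hf x y hxy => by
        simp only [Set.mem_iUnion]; exact exists_congr fun i => hf i x y hxy }
  have hle : windowSigma E n ≤ m' := by
    refine iSup_le fun i => iSup_le fun hi => ?_
    rintro S ⟨t, _, rfl⟩
    intro x y hxy
    simp only [Finset.mem_Icc] at hi
    simp only [Set.mem_preimage, hxy i hi.1 hi.2]
  exact hle S hS
/-! ### Selection of the limiting value -/

section Sel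

variable {E C : Type*} [MeasurableSpace E]

/-- index `i` is usable at level `m`. -/
def Qsel (πs : ℕ → (ℤ → E) → ℤ → Option C) (τs : ℕ → (ℤ → E) → ℕ∞)
    (m : ℕ) (ω : ℤ → E) (i : ℕ) : Prop :=
  πs i ω 0 ≠ none ∧ τs i ω ≤ (m : ℕ∞)

/-- some index is usable at level `m`. -/
def Psel (πs : ℕ → (ℤ → E) → ℤ → Option C) (τs : ℕ → (ℤ → E) → ℕ∞)
    (ω : ℤ → E) (m : ℕ) : Prop :=
  ∃ i, Qsel πs τs m ω i

open Classical in
/-- The level at which a value for coordinate `0` can be selected. -/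
noncomputable def tauSel (πs : ℕ → (ℤ → E) → ℤ → Option C) (τs : ℕ → (ℤ → E) → ℕ∞)
    (ω : ℤ → E) : ℕ∞ :=
  if h : ∃ m, Psel πs τs ω m then ((Nat.find h : ℕ) : ℕ∞) else ⊤

open Classical in
/-- The selected value at coordinate `0`. -/
noncomputable def valSel (πs : ℕ → (ℤ → E) → ℤ → Option C) (τs : ℕ → (ℤ → E) → ℕ∞)
    (ω : ℤ → E) : Option C :=
  if h : ∃ m, Psel πs τs ω m then πs (Nat.find (Nat.find_spec h)) ω 0 else none

set_option linter.unusedSectionVars false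

variable {πs : ℕ → (ℤ → E) → ℤ → Option C} {τs : ℕ → (ℤ → E) → ℕ∞}

theorem Psel_mono {ω : ℤ → E} {m m' : ℕ} (h : Psel πs τs ω m) (hmm : m ≤ m') :
    Psel πs τs ω m' := by
  obtain ⟨i, hi1, hi2⟩ := h
  exact ⟨i, hi1, hi2.trans (by exact_mod_cast Nat.cast_le.mpr hmm)⟩

theorem tauSel_le_iff {ω : ℤ → E} {n : ℕ} :
    tauSel πs τs ω ≤ (n : ℕ∞) ↔ Psel πs τs ω n := by
  classical
  rw [tauSel]
  split_ifs with h
  · rw [Nat.cast_le]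
    constructor
    · intro hle
      exact Psel_mono (Nat.find_spec h) hle
    · intro hn
      exact Nat.find_le hn
  · simp only [top_le_iff]
    constructor
    · intro ht; exact absurd ht (by simp)
    · intro hn; exact absurd ⟨n, hn⟩ h

theorem tauSel_ne_top {ω : ℤ → E} (h : ∃ m, Psel πs τs ω m) : tauSel πs τs ω ≠ ⊤ := by
  classical
  rw [tauSel, dif_pos h]
  simp

section Window

variable (hτwin : ∀ i (k : ℕ), MeasurableSet[windowSigma E k] {ω : ℤ → E | τs i ω ≤ (k : ℕ∞)})
  (hπwin : ∀ i (s : Set (Option C)) (k : ℕ),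
    MeasurableSet[windowSigma E k] ({ω : ℤ → E | πs i ω 0 ∈ s} ∩ {ω | τs i ω ≤ (k : ℕ∞)}))

include hπwin

theorem Qsel_window (m : ℕ) (i : ℕ) {n : ℕ} (hmn : m ≤ n) :
    MeasurableSet[windowSigma E n] {ω : ℤ → E | Qsel πs τs m ω i} := by
  have : {ω : ℤ → E | Qsel πs τs m ω i}
      = {ω : ℤ → E | πs i ω 0 ∈ ({none}ᶜ : Set (Option C))} ∩ {ω | τs i ω ≤ (m : ℕ∞)} := by
    ext ω; simp [Qsel]
  rw [this]
  exact windowSigma_mono hmn _ (hπwin i ({none}ᶜ) m)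

theorem Psel_window {m : ℕ} {n : ℕ} (hmn : m ≤ n) :
    MeasurableSet[windowSigma E n] {ω : ℤ → E | Psel πs τs ω m} := by
  have : {ω : ℤ → E | Psel πs τs ω m} = ⋃ i, {ω : ℤ → E | Qsel πs τs m ω i} := by
    ext ω; simp [Psel]
  rw [this]
  exact MeasurableSet.iUnion fun i => Qsel_window hπwin m i hmn

theorem valSel_window (o : Option C) (n : ℕ) :
    MeasurableSet[windowSigma E n]
      ({ω : ℤ → E | valSel πs τs ω = o} ∩ {ω | Psel πs τs ω n}) := by
  classical
  have hset : {ω : ℤ → E | valSel πs τs ω = o} ∩ {ω | Psel πs τs ω n}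
      = ⋃ (m : ℕ) (_ : m ≤ n) (i : ℕ),
          (({ω : ℤ → E | Psel πs τs ω m} ∩ ⋂ (m' : ℕ) (_ : m' < m), {ω | Psel πs τs ω m'}ᶜ)
            ∩ ({ω | Qsel πs τs m ω i} ∩ ⋂ (j : ℕ) (_ : j < i), {ω | Qsel πs τs m ω j}ᶜ)
            ∩ ({ω | πs i ω 0 ∈ ({o} : Set (Option C))} ∩ {ω | τs i ω ≤ (m : ℕ∞)})) := by
    ext ω
    simp only [Set.mem_inter_iff, Set.mem_setOf_eq, Set.mem_iUnion, Set.mem_iInter,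
      Set.mem_compl_iff, Set.mem_singleton_iff]
    constructor
    · rintro ⟨hval, hPn⟩
      have h : ∃ m, Psel πs τs ω m := ⟨n, hPn⟩
      refine ⟨Nat.find h, Nat.find_le hPn, Nat.find (Nat.find_spec h),
        ⟨⟨⟨Nat.find_spec h, fun m' hm' => Nat.find_min h hm'⟩,
         ⟨Nat.find_spec (Nat.find_spec h), fun j hj => Nat.find_min (Nat.find_spec h) hj⟩⟩,
         ?_, (Nat.find_spec (Nat.find_spec h)).2⟩⟩
      rw [← hval, valSel, dif_pos h]
    · rintro ⟨m, hmn, i, ⟨⟨hPm, hPlt⟩, ⟨hQ, hQlt⟩⟩, hvo, -⟩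
      have h : ∃ m, Psel πs τs ω m := ⟨m, hPm⟩
      have hfm : Nat.find h = m :=
        le_antisymm (Nat.find_le hPm) (Nat.le_find_iff h m |>.mpr fun m' hm' => hPlt m' hm')
      refine ⟨?_, Psel_mono hPm hmn⟩
      rw [valSel, dif_pos h]
      have hfs : Psel πs τs ω (Nat.find h) := Nat.find_spec h
      have hQ' : Qsel πs τs (Nat.find h) ω i := hfm ▸ hQ
      have hQlt' : ∀ j < i, ¬ Qsel πs τs (Nat.find h) ω j := fun j hj => hfm ▸ hQlt j hj
      have hfi : Nat.find hfs = i :=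
        le_antisymm (Nat.find_le hQ') (Nat.le_find_iff hfs i |>.mpr hQlt')
      rw [hfi, hvo]
  rw [hset]
  refine MeasurableSet.iUnion fun m => MeasurableSet.iUnion fun hmn =>
    MeasurableSet.iUnion fun i => ?_
  refine MeasurableSet.inter (MeasurableSet.inter ?_ ?_) ?_
  · exact (Psel_window hπwin hmn).inter
      (MeasurableSet.iInter fun m' => MeasurableSet.iInter fun hm' =>
        (Psel_window hπwin (le_of_lt (lt_of_lt_of_le hm' hmn))).compl)
  · exact (Qsel_window hπwin m i hmn).inter
      (MeasurableSet.iInter fun j => MeasurableSet.iInter fun _ =>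
        (Qsel_window hπwin m j hmn).compl)
  · exact windowSigma_mono hmn _ (hπwin i {o} m)

theorem valSel_measurable [Countable C] : Measurable (valSel πs τs) := by
  classical
  have key : ∀ a : C, MeasurableSet {ω : ℤ → E | valSel πs τs ω = some a} := by
    intro a
    have : {ω : ℤ → E | valSel πs τs ω = some a}
        = ⋃ n : ℕ, ({ω : ℤ → E | valSel πs τs ω = some a} ∩ {ω | Psel πs τs ω n}) := by
      ext ω
      simp only [Set.mem_setOf_eq, Set.mem_iUnion, Set.mem_inter_iff]
      constructor
      · intro hv
        have h : ∃ m, Psel πs τs ω m := by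
          by_contra hc
          rw [valSel, dif_neg hc] at hv
          cases hv
        exact ⟨Nat.find h, hv, Nat.find_spec h⟩
      · rintro ⟨n, hv, _⟩; exact hv
    rw [this]
    exact MeasurableSet.iUnion fun n => windowSigma_le_pi n _ (valSel_window hπwin _ n)
  refine measurable_to_countable' fun o => ?_
  match o with
  | some a => exact key a
  | none =>
    have : (valSel πs τs) ⁻¹' {none} = (⋃ a : C, {ω : ℤ → E | valSel πs τs ω = some a})ᶜ := by
      ext ω
      simp only [Set.mem_preimage, Set.mem_singleton_iff, Set.mem_compl_iff, Set.mem_iUnion,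
        Set.mem_setOf_eq]
      cases h : valSel πs τs ω <;> simp
    rw [this]
    exact (MeasurableSet.iUnion fun a => key a).compl

end Window

theorem valSel_eq_some {ω : ℤ → E}
    (hτ : ∀ i, τs i ω ≠ ⊤)
    (hcons : ∀ i j a b, πs i ω 0 = some a → πs j ω 0 = some b → a = b)
    {i : ℕ} {a : C} (h : πs i ω 0 = some a) :
    valSel πs τs ω = some a := by
  classical
  obtain ⟨m, hm⟩ := WithTop.ne_top_iff_exists.mp (hτ i)
  have hP : ∃ m', Psel πs τs ω m' := ⟨m, i, by simp [h], le_of_eq hm.symm⟩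
  rw [valSel, dif_pos hP]
  obtain ⟨b, hb⟩ := Option.ne_none_iff_exists'.mp (Nat.find_spec (Nat.find_spec hP)).1
  rw [hb]
  exact congrArg some (hcons _ _ _ _ hb h)

end Sel
/-! ### One-sided construction of the limiting finitary factor map -/

section Side

set_option linter.unusedSectionVars false

/-- a.e. equivariance upgrades to all powers of the shift. -/
theorem shift_eqv_all {E D : Type*} [MeasurableSpace E] {μ : Measure (ℤ → E)}
    (hinv : Measure.map zshift μ = μ) {π : (ℤ → E) → ℤ → D}
    (heqv : ∀ᵐ ω ∂μ, π (zshift ω) = zshift (π ω)) :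
    ∀ᵐ ω ∂μ, ∀ k : ℤ, π (shiftBy k ω) = shiftBy k (π ω) := by
  rw [ae_all_iff]
  intro k
  induction k using Int.induction_on with
  | zero => filter_upwards with ω; rw [shiftBy_zero, shiftBy_zero]
  | succ m ih =>
    have ih' := ae_shiftBy hinv 1 ih
    filter_upwards [ih', heqv] with ω h1 h2
    have h2' : π (shiftBy 1 ω) = shiftBy 1 (π ω) := by
      rw [← zshift_eq_shiftBy, ← zshift_eq_shiftBy]; exact h2
    calc π (shiftBy ((m : ℤ) + 1) ω) = π (shiftBy (m : ℤ) (shiftBy 1 ω)) := by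
          rw [shiftBy_shiftBy]
      _ = shiftBy (m : ℤ) (π (shiftBy 1 ω)) := h1
      _ = shiftBy (m : ℤ) (shiftBy 1 (π ω)) := by rw [h2']
      _ = shiftBy ((m : ℤ) + 1) (π ω) := by rw [shiftBy_shiftBy]
  | pred m ih =>
    have ih' := ae_shiftBy hinv (-1) ih
    have hneg : ∀ᵐ ω ∂μ, π (shiftBy (-1) ω) = shiftBy (-1) (π ω) := by
      filter_upwards [ae_shiftBy hinv (-1) heqv] with ω h
      have e : zshift (shiftBy (-1) ω) = ω := by
        rw [zshift_eq_shiftBy, shiftBy_shiftBy, show (1 : ℤ) + -1 = 0 from by ring, shiftBy_zero]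
      rw [e] at h
      have h' := congrArg (shiftBy (-1)) h
      rw [zshift_eq_shiftBy (π (shiftBy (-1) ω)), shiftBy_shiftBy,
        show (-1 : ℤ) + 1 = 0 from by ring, shiftBy_zero] at h'
      exact h'.symm
    filter_upwards [ih', hneg] with ω h1 h2
    calc π (shiftBy (-(m : ℤ) - 1) ω) = π (shiftBy (-(m : ℤ)) (shiftBy (-1) ω)) := by
          rw [shiftBy_shiftBy, show -(m : ℤ) + -1 = -(m : ℤ) - 1 from by ring]
      _ = shiftBy (-(m : ℤ)) (π (shiftBy (-1) ω)) := h1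
      _ = shiftBy (-(m : ℤ)) (shiftBy (-1) (π ω)) := by rw [h2]
      _ = shiftBy (-(m : ℤ) - 1) (π ω) := by
          rw [shiftBy_shiftBy, show -(m : ℤ) + -1 = -(m : ℤ) - 1 from by ring]

variable {A B C : Type*} [MeasurableSpace A] [MeasurableSpace B]
  [Countable C] [MeasurableSpace C] [MeasurableSingletonClass C]

/-- Shift-equivariant coordinate-`n` uncertainty. -/
theorem unc_coord {μ : Measure (ℤ → A × B)} (hinv : Measure.map zshift μ = μ)
    {π : (ℤ → A × B) → ℤ → Option C} (hm : Measurable π)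
    (heqv : ∀ᵐ ω ∂μ, π (zshift ω) = zshift (π ω)) (n : ℤ) :
    μ {ω | π ω n = none} = μ {ω | π ω 0 = none} := by
  have hshift := shift_eqv_all hinv heqv
  have hms : MeasurableSet {ω : ℤ → A × B | π ω 0 = none} :=
    ((measurable_pi_apply 0).comp hm) (MeasurableSet.of_discrete (s := {none}))
  have hae : {ω : ℤ → A × B | π ω n = none} =ᵐ[μ] shiftBy n ⁻¹' {ω | π ω 0 = none} := by
    filter_upwards [hshift] with ω h
    have hcoord : π ω n = π (shiftBy n ω) 0 := by rw [h n]; simp [shiftBy]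
    show (π ω n = none) = (π (shiftBy n ω) 0 = none)
    rw [hcoord]
  rw [measure_congr hae, measure_shiftBy_preimage hinv n hms]

/-- All a.e. regularity facts used for the construction. -/
theorem side_ae_facts {μ : Measure (ℤ → A × B)} [IsProbabilityMeasure μ]
    (hinv : Measure.map zshift μ = μ)
    {πs : ℕ → (ℤ → A × B) → ℤ → Option C} {τs : ℕ → (ℤ → A × B) → ℕ∞}
    (heqv : ∀ i, ∀ᵐ ω ∂μ, πs i (zshift ω) = zshift (πs i ω))
    (hτtop : ∀ i, μ {ω | τs i ω = ⊤} = 0)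
    (hext : ∀ i, ∀ᵐ ω ∂μ, ∀ n : ℤ, πs i ω n ≠ none → πs (i+1) ω n = πs i ω n) :
    ∀ᵐ ω ∂μ,
      (∀ i (k : ℤ), πs i (shiftBy k ω) = shiftBy k (πs i ω)) ∧
      (∀ i (k : ℤ), τs i (shiftBy k ω) ≠ ⊤) ∧
      (∀ (n : ℤ) i j a b, πs i ω n = some a → πs j ω n = some b → a = b) := by
  refine ((ae_all_iff.mpr ?_).and ((ae_all_iff.mpr ?_).and ?_))
  · intro i
    exact shift_eqv_all hinv (heqv i)
  · intro i
    rw [ae_all_iff]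
    intro k
    have base : ∀ᵐ ω ∂μ, τs i ω ≠ ⊤ := by
      rw [ae_iff]
      simpa using hτtop i
    exact ae_shiftBy hinv k base
  · have hmono : ∀ᵐ ω ∂μ, ∀ i, ∀ n : ℤ, πs i ω n ≠ none → πs (i+1) ω n = πs i ω n :=
      ae_all_iff.mpr hext
    filter_upwards [hmono] with ω H n i j a b hi hj
    have step : ∀ i₀ k (a₀ : C), πs i₀ ω n = some a₀ → πs (i₀ + k) ω n = some a₀ := by
      intro i₀ k
      induction k with
      | zero => intro a₀ h; simpa using h
      | succ k ihk =>
        intro a₀ h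
        have hk := ihk a₀ h
        have hH := H (i₀ + k) n (by rw [hk]; simp)
        rw [show i₀ + (k+1) = (i₀ + k) + 1 from by ring, hH, hk]
    rcases le_total i j with hij | hij
    · obtain ⟨k, rfl⟩ := Nat.exists_eq_add_of_le hij
      have hj' := step i k a hi
      rw [hj'] at hj
      exact Option.some.inj hj
    · obtain ⟨k, rfl⟩ := Nat.exists_eq_add_of_le hij
      have hi' := step j k b hj
      rw [hi'] at hi
      exact (Option.some.inj hi).symm

end Side
/-! ### The limiting map and its properties -/

section Side2

set_option linter.unusedSectionVars false

variable {A B C : Type*} [MeasurableSpace A] [MeasurableSpace B]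
  [Countable C] [MeasurableSpace C] [MeasurableSingletonClass C]

/-- The limiting factor map built from the partial maps `πs` and stopping times `τs`. -/
noncomputable def PhiMap (c₀ : C) (πs : ℕ → (ℤ → A × B) → ℤ → Option C)
    (τs : ℕ → (ℤ → A × B) → ℕ∞) (ω : ℤ → A × B) (n : ℤ) : C × B :=
  ((valSel πs τs (shiftBy n ω)).getD c₀, (ω n).2)

theorem PhiMap_snd (c₀ : C) (πs : ℕ → (ℤ → A × B) → ℤ → Option C)
    (τs : ℕ → (ℤ → A × B) → ℕ∞) (ω : ℤ → A × B) (n : ℤ) :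
    (PhiMap c₀ πs τs ω n).2 = (ω n).2 := rfl

theorem PhiMap_equivariant (c₀ : C) (πs : ℕ → (ℤ → A × B) → ℤ → Option C)
    (τs : ℕ → (ℤ → A × B) → ℕ∞) (ω : ℤ → A × B) :
    PhiMap c₀ πs τs (zshift ω) = zshift (PhiMap c₀ πs τs ω) := by
  funext n
  show ((valSel πs τs (shiftBy n (zshift ω))).getD c₀, (zshift ω n).2)
    = ((valSel πs τs (shiftBy (n+1) ω)).getD c₀, (ω (n+1)).2)
  rw [zshift_eq_shiftBy, shiftBy_shiftBy]
  rfl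

theorem PhiMap_measurable (c₀ : C) {πs : ℕ → (ℤ → A × B) → ℤ → Option C}
    {τs : ℕ → (ℤ → A × B) → ℕ∞}
    (hπwin : ∀ i (s : Set (Option C)) (k : ℕ),
      MeasurableSet[windowSigma (A × B) k]
        ({ω : ℤ → A × B | πs i ω 0 ∈ s} ∩ {ω | τs i ω ≤ (k : ℕ∞)})) :
    Measurable (PhiMap c₀ πs τs) := by
  refine measurable_pi_lambda _ fun n => Measurable.prodMk ?_ ?_
  · exact (Measurable.of_discrete (f := fun o : Option C => o.getD c₀)).comp
      ((valSel_measurable hπwin).comp (measurable_shiftBy n))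
  · exact (measurable_pi_apply n).snd

/-- On the good full-measure set, `PhiMap` extends every partial map. -/
theorem PhiMap_extends (c₀ : C) {πs : ℕ → (ℤ → A × B) → ℤ → Option C}
    {τs : ℕ → (ℤ → A × B) → ℕ∞} {ω : ℤ → A × B}
    (hsh : ∀ i (k : ℤ), πs i (shiftBy k ω) = shiftBy k (πs i ω))
    (hτ : ∀ i (k : ℤ), τs i (shiftBy k ω) ≠ ⊤)
    (hcons : ∀ (n : ℤ) i j a b, πs i ω n = some a → πs j ω n = some b → a = b)
    {i : ℕ} {n : ℤ} {a : C} (h : πs i ω n = some a) :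
    PhiMap c₀ πs τs ω n = (a, (ω n).2) := by
  have hcoord : ∀ j, πs j (shiftBy n ω) 0 = πs j ω n := by
    intro j
    rw [hsh j n]
    show πs j ω (0 + n) = πs j ω n
    rw [zero_add]
  have hv : valSel πs τs (shiftBy n ω) = some a := by
    refine valSel_eq_some (fun j => hτ j n) ?_ (i := i) ?_
    · intro i' j' a' b' hi' hj'
      rw [hcoord i'] at hi'
      rw [hcoord j'] at hj'
      exact hcons n i' j' a' b' hi' hj'
    · rw [hcoord i]; exact h
  show ((valSel πs τs (shiftBy n ω)).getD c₀, (ω n).2) = (a, (ω n).2)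
  rw [hv]
  rfl

theorem PhiMap_stopFinitary (c₀ : C) {μ : Measure (ℤ → A × B)} [IsProbabilityMeasure μ]
    {πs : ℕ → (ℤ → A × B) → ℤ → Option C} {τs : ℕ → (ℤ → A × B) → ℕ∞}
    (hmeas : ∀ i, Measurable (πs i))
    (hπwin : ∀ i (s : Set (Option C)) (k : ℕ),
      MeasurableSet[windowSigma (A × B) k]
        ({ω : ℤ → A × B | πs i ω 0 ∈ s} ∩ {ω | τs i ω ≤ (k : ℕ∞)}))
    (hτae : ∀ᵐ ω ∂μ, ∀ i, τs i ω ≠ ⊤)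
    (hunc : Tendsto (fun i => μ {ω | πs i ω 0 = none}) atTop (nhds 0)) :
    StopFinitary μ (PhiMap c₀ πs τs) := by
  refine ⟨tauSel πs τs, ?_, ?_, ?_⟩
  · intro n
    have : {ω : ℤ → A × B | tauSel πs τs ω ≤ (n : ℕ∞)} = {ω | Psel πs τs ω n} := by
      ext ω; exact tauSel_le_iff
    rw [this]
    exact Psel_window hπwin le_rfl
  · -- a.e. finiteness of tauSel
    have hN : μ (⋂ i, {ω : ℤ → A × B | πs i ω 0 = none}) = 0 := by
      refine le_antisymm ?_ zero_le
      exact ge_of_tendsto hunc (Eventually.of_forall fun i =>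
        measure_mono (Set.iInter_subset _ i))
    have hdef : ∀ᵐ ω ∂μ, ∃ i, πs i ω 0 ≠ none := by
      rw [ae_iff]
      have : {ω : ℤ → A × B | ¬ ∃ i, πs i ω 0 ≠ none}
          = ⋂ i, {ω : ℤ → A × B | πs i ω 0 = none} := by
        ext ω; simp
      rw [this]; exact hN
    have hae : ∀ᵐ ω ∂μ, tauSel πs τs ω ≠ ⊤ := by
      filter_upwards [hdef, hτae] with ω hd hτ
      obtain ⟨i, hi⟩ := hd
      obtain ⟨m, hm⟩ := WithTop.ne_top_iff_exists.mp (hτ i)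
      exact tauSel_ne_top ⟨m, i, hi, le_of_eq hm.symm⟩
    rw [show {y : ℤ → A × B | tauSel πs τs y = ⊤} = {y | ¬ tauSel πs τs y ≠ ⊤} from by
      ext y; simp, ← ae_iff]
    exact hae
  · intro s hs n
    have hset : {ω : ℤ → A × B | PhiMap c₀ πs τs ω 0 ∈ s}
          ∩ {ω | tauSel πs τs ω ≤ (n : ℕ∞)}
        = ⋃ o : Option C,
            (({ω : ℤ → A × B | valSel πs τs ω = o} ∩ {ω | Psel πs τs ω n})
              ∩ {ω : ℤ → A × B | ((o.getD c₀ : C), (ω 0).2) ∈ s}) := by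
      ext ω
      have hphi : PhiMap c₀ πs τs ω 0 = ((valSel πs τs ω).getD c₀, (ω 0).2) := by
        show ((valSel πs τs (shiftBy 0 ω)).getD c₀, (ω 0).2) = _
        rw [shiftBy_zero]
      simp only [Set.mem_inter_iff, Set.mem_setOf_eq, Set.mem_iUnion]
      constructor
      · rintro ⟨hmem, hτ⟩
        exact ⟨valSel πs τs ω, ⟨rfl, tauSel_le_iff.mp hτ⟩, by rw [← hphi]; exact hmem⟩
      · rintro ⟨o, ⟨hvo, hP⟩, hmem⟩
        refine ⟨?_, tauSel_le_iff.mpr hP⟩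
        rw [hphi, hvo]
        exact hmem
    rw [hset]
    refine MeasurableSet.iUnion fun o => MeasurableSet.inter (valSel_window hπwin o n) ?_
    have : {ω : ℤ → A × B | ((o.getD c₀ : C), (ω 0).2) ∈ s}
        = (fun x : ℤ → A × B => x 0) ⁻¹' {p : A × B | ((o.getD c₀ : C), p.2) ∈ s} := rfl
    rw [this]
    exact eval_window n ((measurable_const.prodMk measurable_snd) hs)

end Side2
/-! ### More generic auxiliary lemmas -/

section Aux6

/-- Exact equivariance upgrades to all powers of the shift. -/
theorem shift_eqv_all_exact {E D : Type*} {f : (ℤ → E) → ℤ → D}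
    (h : ∀ x, f (zshift x) = zshift (f x)) :
    ∀ (k : ℤ) (x : ℤ → E), f (shiftBy k x) = shiftBy k (f x) := by
  have hneg : ∀ x, f (shiftBy (-1) x) = shiftBy (-1) (f x) := by
    intro x
    have h1 := h (shiftBy (-1) x)
    have e : zshift (shiftBy (-1) x) = x := by
      rw [zshift_eq_shiftBy, shiftBy_shiftBy, show (1 : ℤ) + -1 = 0 from by ring, shiftBy_zero]
    rw [e] at h1
    have h2 := congrArg (shiftBy (-1)) h1
    rw [zshift_eq_shiftBy (f (shiftBy (-1) x)), shiftBy_shiftBy,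
      show (-1 : ℤ) + 1 = 0 from by ring, shiftBy_zero] at h2
    exact h2.symm
  intro k
  induction k using Int.induction_on with
  | zero => intro x; rw [shiftBy_zero, shiftBy_zero]
  | succ m ih =>
    intro x
    have h' : f (shiftBy 1 x) = shiftBy 1 (f x) := by
      rw [← zshift_eq_shiftBy, ← zshift_eq_shiftBy]; exact h x
    calc f (shiftBy ((m : ℤ) + 1) x) = f (shiftBy (m : ℤ) (shiftBy 1 x)) := by
          rw [shiftBy_shiftBy]
      _ = shiftBy (m : ℤ) (f (shiftBy 1 x)) := ih _
      _ = shiftBy (m : ℤ) (shiftBy 1 (f x)) := by rw [h']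
      _ = shiftBy ((m : ℤ) + 1) (f x) := by rw [shiftBy_shiftBy]
  | pred m ih =>
    intro x
    calc f (shiftBy (-(m : ℤ) - 1) x) = f (shiftBy (-(m : ℤ)) (shiftBy (-1) x)) := by
          rw [shiftBy_shiftBy, show -(m : ℤ) + -1 = -(m : ℤ) - 1 from by ring]
      _ = shiftBy (-(m : ℤ)) (f (shiftBy (-1) x)) := ih _
      _ = shiftBy (-(m : ℤ)) (shiftBy (-1) (f x)) := by rw [hneg]
      _ = shiftBy (-(m : ℤ) - 1) (f x) := by
          rw [shiftBy_shiftBy, show -(m : ℤ) + -1 = -(m : ℤ) - 1 from by ring]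

theorem pi_eq_generateFrom_windows (E : Type*) [MeasurableSpace E] :
    (MeasurableSpace.pi : MeasurableSpace (ℤ → E))
      = MeasurableSpace.generateFrom {S | ∃ n, MeasurableSet[windowSigma E n] S} := by
  refine le_antisymm ?_ ?_
  · rw [MeasurableSpace.pi]
    refine iSup_le fun i => ?_
    have h1 : MeasurableSpace.comap (fun x : ℤ → E => x i) ‹MeasurableSpace E›
        ≤ windowSigma E i.natAbs :=
      comap_eval_le_windowSigma i.natAbs i ⟨by omega, by omega⟩
    refine h1.trans ?_
    intro S hS
    exact MeasurableSpace.measurableSet_generateFrom ⟨i.natAbs, hS⟩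
  · refine MeasurableSpace.generateFrom_le ?_
    rintro S ⟨n, hS⟩
    exact windowSigma_le_pi n _ hS

theorem isPiSystem_windows (E : Type*) [MeasurableSpace E] :
    IsPiSystem {S : Set (ℤ → E) | ∃ n, MeasurableSet[windowSigma E n] S} := by
  rintro S ⟨n, hS⟩ T ⟨m, hT⟩ -
  exact ⟨max n m, (windowSigma_mono (le_max_left n m) _ hS).inter
    (windowSigma_mono (le_max_right n m) _ hT)⟩

/-- Two probability measures agreeing on all window-measurable sets agree. -/
theorem measure_ext_windows {E : Type*} [MeasurableSpace E]
    {μ' ν' : Measure (ℤ → E)} [IsProbabilityMeasure μ'] [IsProbabilityMeasure ν']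
    (h : ∀ (n : ℕ) (S : Set (ℤ → E)), MeasurableSet[windowSigma E n] S → μ' S = ν' S) :
    μ' = ν' := by
  refine ext_of_generate_finite _ (pi_eq_generateFrom_windows E) (isPiSystem_windows E) ?_ ?_
  · rintro S ⟨n, hS⟩; exact h n S hS
  · simp

theorem measurableSet_eq_fun_standardBorel {α B : Type*} [MeasurableSpace α]
    [MeasurableSpace B] [StandardBorelSpace B] {f g : α → B}
    (hf : Measurable f) (hg : Measurable g) : MeasurableSet {x | f x = g x} := by
  letI := upgradeStandardBorel B
  have hset : {x | f x = g x} = (fun x => (f x, g x)) ⁻¹' (Set.diagonal B) := rfl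
  rw [hset]
  exact (hf.prodMk hg) isClosed_diagonal.measurableSet

theorem measurableSet_eq_fun_prod {α A B : Type*} [MeasurableSpace α]
    [MeasurableSpace A] [Countable A] [MeasurableSingletonClass A]
    [MeasurableSpace B] [StandardBorelSpace B] {f g : α → A × B}
    (hf : Measurable f) (hg : Measurable g) : MeasurableSet {x | f x = g x} := by
  have : {x | f x = g x} = {x | (f x).1 = (g x).1} ∩ {x | (f x).2 = (g x).2} := by
    ext x
    simp only [Set.mem_setOf_eq, Set.mem_inter_iff, Prod.ext_iff]
  rw [this]
  exact (measurableSet_eq_fun hf.fst hg.fst).inter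
    (measurableSet_eq_fun_standardBorel hf.snd hg.snd)

end Aux6
/-! ### Joining projections -/

section Joinproj

variable {A A' B : Type*} [MeasurableSpace A] [MeasurableSpace A'] [MeasurableSpace B]

def jfst (ω : ℤ → (A × A') × B) : ℤ → A × B := fun j => (((ω j).1).1, (ω j).2)

def jsnd (ω : ℤ → (A × A') × B) : ℤ → A' × B := fun j => (((ω j).1).2, (ω j).2)

theorem measurable_jfst : Measurable (jfst (A := A) (A' := A') (B := B)) :=
  measurable_pi_lambda _ fun j =>
    ((measurable_pi_apply j).fst.fst).prodMk (measurable_pi_apply j).snd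

theorem measurable_jsnd : Measurable (jsnd (A := A) (A' := A') (B := B)) :=
  measurable_pi_lambda _ fun j =>
    ((measurable_pi_apply j).fst.snd).prodMk (measurable_pi_apply j).snd

end Joinproj
/-- An extending sequence of finitary partial isomorphisms relative to `W`
with vanishing uncertainties yields a finitary isomorphism relative to `W`. -/
theorem relatively_finitarily_isomorphic_of_partial_isomorphisms
    {A A' B : Type}
    [Countable A] [MeasurableSpace A] [MeasurableSingletonClass A]
    [Countable A'] [MeasurableSpace A'] [MeasurableSingletonClass A']
    [MeasurableSpace B] [StandardBorelSpace B]
    (μ : Measure (ℤ → A × B)) (ν : Measure (ℤ → A' × B))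
    [IsProbabilityMeasure μ] [IsProbabilityMeasure ν]
    (hμerg : Ergodic (zshift (A := A × B)) μ) (hνerg : Ergodic (zshift (A := A' × B)) ν)
    (hW : μ.map seqSnd = ν.map seqSnd)
    (π : ℕ → ((ℤ → A × B) → ℤ → Option A')) (π' : ℕ → ((ℤ → A' × B) → ℤ → Option A))
    (hpi : ∀ i : ℕ, PartialIso μ ν (π i) (π' i))
    (hfin : ∀ i : ℕ, StopFinitary μ (π i) ∧ StopFinitary ν (π' i))
    (hext : ∀ i : ℕ,
      (∀ᵐ ω ∂μ, ∀ n : ℤ, π i ω n ≠ none → π (i + 1) ω n = π i ω n) ∧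
      (∀ᵐ ω ∂ν, ∀ n : ℤ, π' i ω n ≠ none → π' (i + 1) ω n = π' i ω n))
    (hunc : Tendsto (fun i => μ {ω | π i ω 0 = none}) atTop (nhds 0) ∧
            Tendsto (fun i => ν {ω | π' i ω 0 = none}) atTop (nhds 0)) :
    RelFinitaryIso μ ν := by
  classical
  -- shift invariance
  have hμinv : Measure.map zshift μ = μ := hμerg.toMeasurePreserving.map_eq
  have hνinv : Measure.map zshift ν = ν := hνerg.toMeasurePreserving.map_eq
  -- nonempty alphabets
  have hneA' : Nonempty A' := by
    by_contra h
    rw [not_nonempty_iff] at h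
    have hempty : IsEmpty (ℤ → A' × B) := ⟨fun f => h.false (f 0).1⟩
    have h1 : ν Set.univ = 1 := measure_univ
    rw [Set.univ_eq_empty_iff.mpr hempty, measure_empty] at h1
    exact zero_ne_one h1
  have hneA : Nonempty A := by
    by_contra h
    rw [not_nonempty_iff] at h
    have hempty : IsEmpty (ℤ → A × B) := ⟨fun f => h.false (f 0).1⟩
    have h1 : μ Set.univ = 1 := measure_univ
    rw [Set.univ_eq_empty_iff.mpr hempty, measure_empty] at h1
    exact zero_ne_one h1
  obtain ⟨a'0⟩ := hneA'
  obtain ⟨a0⟩ := hneA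
  -- unpack the partial isomorphisms
  choose hπm hπ'm hπe hπ'e ρ hρprob hρF hρG hAgF hAgG using hpi
  -- unpack the stopping times
  choose τ1 hτ1win hτ1top hτ1cond using fun i => (hfin i).1
  choose τ2 hτ2win hτ2top hτ2cond using fun i => (hfin i).2
  have hπwin1 : ∀ i (s : Set (Option A')) (k : ℕ),
      MeasurableSet[windowSigma (A × B) k]
        ({ω : ℤ → A × B | π i ω 0 ∈ s} ∩ {ω | τ1 i ω ≤ (k : ℕ∞)}) :=
    fun i s k => hτ1cond i s MeasurableSet.of_discrete k
  have hπwin2 : ∀ i (s : Set (Option A)) (k : ℕ),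
      MeasurableSet[windowSigma (A' × B) k]
        ({ω : ℤ → A' × B | π' i ω 0 ∈ s} ∩ {ω | τ2 i ω ≤ (k : ℕ∞)}) :=
    fun i s k => hτ2cond i s MeasurableSet.of_discrete k
  -- a.e. regularity facts
  have hfactμ := side_ae_facts hμinv hπe hτ1top (fun i => (hext i).1)
  have hfactν := side_ae_facts hνinv hπ'e hτ2top (fun i => (hext i).2)
  -- the limiting maps
  set Φ : (ℤ → A × B) → ℤ → A' × B := PhiMap a'0 π τ1 with hΦdef
  set Ψ : (ℤ → A' × B) → ℤ → A × B := PhiMap a0 π' τ2 with hΨdef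
  have hΦm : Measurable Φ := PhiMap_measurable a'0 hπwin1
  have hΨm : Measurable Ψ := PhiMap_measurable a0 hπwin2
  have hΦeq : ∀ ω, Φ (zshift ω) = zshift (Φ ω) := PhiMap_equivariant a'0 π τ1
  have hΨeq : ∀ ω, Ψ (zshift ω) = zshift (Ψ ω) := PhiMap_equivariant a0 π' τ2
  have hτae1 : ∀ᵐ ω ∂μ, ∀ i, τ1 i ω ≠ ⊤ :=
    ae_all_iff.mpr fun i => by rw [ae_iff]; simpa using hτ1top i
  have hτae2 : ∀ᵐ ω ∂ν, ∀ i, τ2 i ω ≠ ⊤ :=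
    ae_all_iff.mpr fun i => by rw [ae_iff]; simpa using hτ2top i
  have hSFΦ : StopFinitary μ Φ := PhiMap_stopFinitary a'0 hπm hπwin1 hτae1 hunc.1
  have hSFΨ : StopFinitary ν Ψ := PhiMap_stopFinitary a0 hπ'm hπwin2 hτae2 hunc.2
  have hΦext : ∀ᵐ ω ∂μ, ∀ i (n : ℤ) a, π i ω n = some a → Φ ω n = (a, (ω n).2) := by
    filter_upwards [hfactμ] with ω h
    exact fun i n a hh => PhiMap_extends a'0 h.1 h.2.1 h.2.2 hh
  have hΨext : ∀ᵐ ω ∂ν, ∀ i (n : ℤ) a, π' i ω n = some a → Ψ ω n = (a, (ω n).2) := by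
    filter_upwards [hfactν] with ω h
    exact fun i n a hh => PhiMap_extends a0 h.1 h.2.1 h.2.2 hh
  -- joining marginals, in terms of jfst / jsnd
  have hρF' : ∀ i, (ρ i).map jfst = μ := hρF
  have hρG' : ∀ i, (ρ i).map jsnd = ν := hρG
  -- per-coordinate uncertainties
  have hu1 : ∀ i (k : ℤ), μ {ω | π i ω k = none} = μ {ω | π i ω 0 = none} :=
    fun i k => unc_coord hμinv (hπm i) (hπe i) k
  have hu2 : ∀ i (k : ℤ), ν {ω | π' i ω k = none} = ν {ω | π' i ω 0 = none} :=
    fun i k => unc_coord hνinv (hπ'm i) (hπ'e i) k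
  -- key estimate: per-coordinate disagreement under the joining
  have key1 : ∀ (i : ℕ) (k : ℤ),
      ρ i {ω : ℤ → (A × A') × B | Φ (jfst ω) k ≠ jsnd ω k} ≤ μ {ω | π i ω 0 = none} := by
    intro i k
    have hT1 : ∀ᵐ ω ∂ρ i, ∀ i' (n : ℤ) a,
        π i' (jfst ω) n = some a → Φ (jfst ω) n = (a, ((jfst ω) n).2) := by
      refine ae_of_ae_map (p := fun y => ∀ i' (n : ℤ) a, π i' y n = some a → Φ y n = (a, (y n).2))
        (measurable_jfst (A := A) (A' := A') (B := B)).aemeasurable ?_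
      rw [hρF' i]
      exact hΦext
    have hT2 : ∀ᵐ ω ∂ρ i, ∀ (n : ℤ) (a : A'),
        π i (jfst ω) n = some a → ((ω n).1).2 = a := hAgF i
    have hnull : ρ i {ω : ℤ → (A × A') × B |
        ¬ (ω ∈ {ω : ℤ → (A × A') × B | Φ (jfst ω) k ≠ jsnd ω k}
          → ω ∈ {ω : ℤ → (A × A') × B | π i (jfst ω) k = none})} = 0 := by
      rw [← ae_iff]
      filter_upwards [hT1, hT2] with ω h1 h2
      intro hne
      by_contra hc
      have hc' : π i (jfst ω) k ≠ none := hc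
      obtain ⟨a, ha⟩ := Option.ne_none_iff_exists'.mp hc'
      have hne' : Φ (jfst ω) k ≠ jsnd ω k := hne
      apply hne'
      have e1 := h1 i k a ha
      have e2 := h2 k a ha
      rw [e1]
      show (a, ((jfst ω) k).2) = (((ω k).1).2, (ω k).2)
      rw [e2]
      rfl
    have hsub : {ω : ℤ → (A × A') × B | Φ (jfst ω) k ≠ jsnd ω k}
        ⊆ {ω : ℤ → (A × A') × B | π i (jfst ω) k = none}
          ∪ {ω : ℤ → (A × A') × B |
            ¬ (ω ∈ {ω : ℤ → (A × A') × B | Φ (jfst ω) k ≠ jsnd ω k}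
              → ω ∈ {ω : ℤ → (A × A') × B | π i (jfst ω) k = none})} := by
      intro ω hω
      by_cases hg : ω ∈ {ω : ℤ → (A × A') × B | π i (jfst ω) k = none}
      · exact Or.inl hg
      · exact Or.inr fun himp => hg (himp hω)
    calc ρ i {ω : ℤ → (A × A') × B | Φ (jfst ω) k ≠ jsnd ω k}
        ≤ ρ i {ω : ℤ → (A × A') × B | π i (jfst ω) k = none} + 0 := by
          rw [← hnull]
          exact (measure_mono hsub).trans (measure_union_le _ _)
      _ = ρ i (jfst ⁻¹' {x : ℤ → A × B | π i x k = none}) := by rw [add_zero]; rfl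
      _ = μ {x : ℤ → A × B | π i x k = none} := by
          have hms : MeasurableSet {x : ℤ → A × B | π i x k = none} :=
            ((measurable_pi_apply k).comp (hπm i))
              (MeasurableSet.of_discrete (s := ({none} : Set (Option A'))))
          rw [← hρF' i, Measure.map_apply measurable_jfst hms]
      _ = μ {ω | π i ω 0 = none} := hu1 i k
  have key2 : ∀ (i : ℕ) (k : ℤ),
      ρ i {ω : ℤ → (A × A') × B | Ψ (jsnd ω) k ≠ jfst ω k} ≤ ν {ω | π' i ω 0 = none} := by
    intro i k
    have hT1 : ∀ᵐ ω ∂ρ i, ∀ i' (n : ℤ) a,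
        π' i' (jsnd ω) n = some a → Ψ (jsnd ω) n = (a, ((jsnd ω) n).2) := by
      refine ae_of_ae_map (p := fun y => ∀ i' (n : ℤ) a, π' i' y n = some a → Ψ y n = (a, (y n).2))
        (measurable_jsnd (A := A) (A' := A') (B := B)).aemeasurable ?_
      rw [hρG' i]
      exact hΨext
    have hT2 : ∀ᵐ ω ∂ρ i, ∀ (n : ℤ) (a : A),
        π' i (jsnd ω) n = some a → ((ω n).1).1 = a := hAgG i
    have hnull : ρ i {ω : ℤ → (A × A') × B |
        ¬ (ω ∈ {ω : ℤ → (A × A') × B | Ψ (jsnd ω) k ≠ jfst ω k}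
          → ω ∈ {ω : ℤ → (A × A') × B | π' i (jsnd ω) k = none})} = 0 := by
      rw [← ae_iff]
      filter_upwards [hT1, hT2] with ω h1 h2
      intro hne
      by_contra hc
      have hc' : π' i (jsnd ω) k ≠ none := hc
      obtain ⟨a, ha⟩ := Option.ne_none_iff_exists'.mp hc'
      have hne' : Ψ (jsnd ω) k ≠ jfst ω k := hne
      apply hne'
      have e1 := h1 i k a ha
      have e2 := h2 k a ha
      rw [e1]
      show (a, ((jsnd ω) k).2) = (((ω k).1).1, (ω k).2)
      rw [e2]
      rfl
    have hsub : {ω : ℤ → (A × A') × B | Ψ (jsnd ω) k ≠ jfst ω k}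
        ⊆ {ω : ℤ → (A × A') × B | π' i (jsnd ω) k = none}
          ∪ {ω : ℤ → (A × A') × B |
            ¬ (ω ∈ {ω : ℤ → (A × A') × B | Ψ (jsnd ω) k ≠ jfst ω k}
              → ω ∈ {ω : ℤ → (A × A') × B | π' i (jsnd ω) k = none})} := by
      intro ω hω
      by_cases hg : ω ∈ {ω : ℤ → (A × A') × B | π' i (jsnd ω) k = none}
      · exact Or.inl hg
      · exact Or.inr fun himp => hg (himp hω)
    calc ρ i {ω : ℤ → (A × A') × B | Ψ (jsnd ω) k ≠ jfst ω k}
        ≤ ρ i {ω : ℤ → (A × A') × B | π' i (jsnd ω) k = none} + 0 := by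
          rw [← hnull]
          exact (measure_mono hsub).trans (measure_union_le _ _)
      _ = ρ i (jsnd ⁻¹' {x : ℤ → A' × B | π' i x k = none}) := by rw [add_zero]; rfl
      _ = ν {x : ℤ → A' × B | π' i x k = none} := by
          have hms : MeasurableSet {x : ℤ → A' × B | π' i x k = none} :=
            ((measurable_pi_apply k).comp (hπ'm i))
              (MeasurableSet.of_discrete (s := ({none} : Set (Option A))))
          rw [← hρG' i, Measure.map_apply measurable_jsnd hms]
      _ = ν {ω | π' i ω 0 = none} := hu2 i k
  -- window disagreement estimates
  have keyW1 : ∀ (i : ℕ) (n : ℕ),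
      ρ i {ω : ℤ → (A × A') × B |
          ¬ ∀ k : ℤ, -(n : ℤ) ≤ k → k ≤ (n : ℤ) → Φ (jfst ω) k = jsnd ω k}
        ≤ ((Finset.Icc (-(n : ℤ)) (n : ℤ)).card : ℝ≥0∞) * μ {ω | π i ω 0 = none} := by
    intro i n
    have hsub : {ω : ℤ → (A × A') × B |
          ¬ ∀ k : ℤ, -(n : ℤ) ≤ k → k ≤ (n : ℤ) → Φ (jfst ω) k = jsnd ω k}
        ⊆ ⋃ k ∈ Finset.Icc (-(n : ℤ)) (n : ℤ),
            {ω : ℤ → (A × A') × B | Φ (jfst ω) k ≠ jsnd ω k} := by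
      intro ω hω
      simp only [Set.mem_setOf_eq] at hω
      push_neg at hω
      obtain ⟨k, hk1, hk2, hk3⟩ := hω
      simp only [Set.mem_iUnion]
      exact ⟨k, Finset.mem_Icc.mpr ⟨hk1, hk2⟩, hk3⟩
    calc ρ i _ ≤ ρ i (⋃ k ∈ Finset.Icc (-(n : ℤ)) (n : ℤ),
            {ω : ℤ → (A × A') × B | Φ (jfst ω) k ≠ jsnd ω k}) := measure_mono hsub
      _ ≤ ∑ k ∈ Finset.Icc (-(n : ℤ)) (n : ℤ),
            ρ i {ω : ℤ → (A × A') × B | Φ (jfst ω) k ≠ jsnd ω k} :=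
          measure_biUnion_finset_le _ _
      _ ≤ ∑ _k ∈ Finset.Icc (-(n : ℤ)) (n : ℤ), μ {ω | π i ω 0 = none} :=
          Finset.sum_le_sum fun k _ => key1 i k
      _ = ((Finset.Icc (-(n : ℤ)) (n : ℤ)).card : ℝ≥0∞) * μ {ω | π i ω 0 = none} := by
          rw [Finset.sum_const, nsmul_eq_mul]
  have keyW2 : ∀ (i : ℕ) (n : ℕ),
      ρ i {ω : ℤ → (A × A') × B |
          ¬ ∀ k : ℤ, -(n : ℤ) ≤ k → k ≤ (n : ℤ) → Ψ (jsnd ω) k = jfst ω k}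
        ≤ ((Finset.Icc (-(n : ℤ)) (n : ℤ)).card : ℝ≥0∞) * ν {ω | π' i ω 0 = none} := by
    intro i n
    have hsub : {ω : ℤ → (A × A') × B |
          ¬ ∀ k : ℤ, -(n : ℤ) ≤ k → k ≤ (n : ℤ) → Ψ (jsnd ω) k = jfst ω k}
        ⊆ ⋃ k ∈ Finset.Icc (-(n : ℤ)) (n : ℤ),
            {ω : ℤ → (A × A') × B | Ψ (jsnd ω) k ≠ jfst ω k} := by
      intro ω hω
      simp only [Set.mem_setOf_eq] at hω
      push_neg at hω
      obtain ⟨k, hk1, hk2, hk3⟩ := hω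
      simp only [Set.mem_iUnion]
      exact ⟨k, Finset.mem_Icc.mpr ⟨hk1, hk2⟩, hk3⟩
    calc ρ i _ ≤ ρ i (⋃ k ∈ Finset.Icc (-(n : ℤ)) (n : ℤ),
            {ω : ℤ → (A × A') × B | Ψ (jsnd ω) k ≠ jfst ω k}) := measure_mono hsub
      _ ≤ ∑ k ∈ Finset.Icc (-(n : ℤ)) (n : ℤ),
            ρ i {ω : ℤ → (A × A') × B | Ψ (jsnd ω) k ≠ jfst ω k} :=
          measure_biUnion_finset_le _ _
      _ ≤ ∑ _k ∈ Finset.Icc (-(n : ℤ)) (n : ℤ), ν {ω | π' i ω 0 = none} :=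
          Finset.sum_le_sum fun k _ => key2 i k
      _ = ((Finset.Icc (-(n : ℤ)) (n : ℤ)).card : ℝ≥0∞) * ν {ω | π' i ω 0 = none} := by
          rw [Finset.sum_const, nsmul_eq_mul]
  -- the law of Φ is ν
  have hmapΦ : μ.map Φ = ν := by
    haveI : IsProbabilityMeasure (μ.map Φ) := Measure.isProbabilityMeasure_map hΦm.aemeasurable
    refine measure_ext_windows ?_
    intro n S hS
    have hSm : MeasurableSet S := windowSigma_le_pi n _ hS
    rw [Measure.map_apply hΦm hSm]
    have e1 : ∀ i, μ (Φ ⁻¹' S) = ρ i (jfst ⁻¹' (Φ ⁻¹' S)) := by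
      intro i
      rw [← hρF' i, Measure.map_apply measurable_jfst (hΦm hSm)]
    have e2 : ∀ i, ν S = ρ i (jsnd ⁻¹' S) := by
      intro i
      rw [← hρG' i, Measure.map_apply measurable_jsnd hSm]
    have hd1 : ∀ i, μ (Φ ⁻¹' S) ≤ ν S
        + ((Finset.Icc (-(n : ℤ)) (n : ℤ)).card : ℝ≥0∞) * μ {ω | π i ω 0 = none} := by
      intro i
      rw [e1 i, e2 i]
      have hincl : jfst ⁻¹' (Φ ⁻¹' S) ⊆ jsnd ⁻¹' S
          ∪ {ω : ℤ → (A × A') × B |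
              ¬ ∀ k : ℤ, -(n : ℤ) ≤ k → k ≤ (n : ℤ) → Φ (jfst ω) k = jsnd ω k} := by
        intro ω hω
        by_cases hk : ∀ k : ℤ, -(n : ℤ) ≤ k → k ≤ (n : ℤ) → Φ (jfst ω) k = jsnd ω k
        · exact Or.inl ((windowSigma_local hS (Φ (jfst ω)) (jsnd ω) hk).mp hω)
        · exact Or.inr hk
      exact (measure_mono hincl).trans ((measure_union_le _ _).trans
        (add_le_add_right (keyW1 i n) _))
    have hd2 : ∀ i, ν S ≤ μ (Φ ⁻¹' S)
        + ((Finset.Icc (-(n : ℤ)) (n : ℤ)).card : ℝ≥0∞) * μ {ω | π i ω 0 = none} := by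
      intro i
      rw [e1 i, e2 i]
      have hincl : jsnd ⁻¹' S ⊆ jfst ⁻¹' (Φ ⁻¹' S)
          ∪ {ω : ℤ → (A × A') × B |
              ¬ ∀ k : ℤ, -(n : ℤ) ≤ k → k ≤ (n : ℤ) → Φ (jfst ω) k = jsnd ω k} := by
        intro ω hω
        by_cases hk : ∀ k : ℤ, -(n : ℤ) ≤ k → k ≤ (n : ℤ) → Φ (jfst ω) k = jsnd ω k
        · exact Or.inl ((windowSigma_local hS (Φ (jfst ω)) (jsnd ω) hk).mpr hω)
        · exact Or.inr hk
      exact (measure_mono hincl).trans ((measure_union_le _ _).trans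
        (add_le_add_right (keyW1 i n) _))
    have htend : Tendsto (fun i => ((Finset.Icc (-(n : ℤ)) (n : ℤ)).card : ℝ≥0∞)
        * μ {ω | π i ω 0 = none}) atTop (nhds 0) := by
      have := ENNReal.Tendsto.const_mul hunc.1
        (Or.inr (ENNReal.natCast_ne_top (Finset.Icc (-(n : ℤ)) (n : ℤ)).card))
      simpa using this
    have hle1 : μ (Φ ⁻¹' S) ≤ ν S := by
      have hten : Tendsto (fun i => ν S
          + ((Finset.Icc (-(n : ℤ)) (n : ℤ)).card : ℝ≥0∞) * μ {ω | π i ω 0 = none}) atTop (nhds (ν S)) := by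
        simpa using tendsto_const_nhds.add htend
      exact ge_of_tendsto hten (Eventually.of_forall hd1)
    have hle2 : ν S ≤ μ (Φ ⁻¹' S) := by
      have hten : Tendsto (fun i => μ (Φ ⁻¹' S)
          + ((Finset.Icc (-(n : ℤ)) (n : ℤ)).card : ℝ≥0∞) * μ {ω | π i ω 0 = none}) atTop (nhds (μ (Φ ⁻¹' S))) := by
        simpa using tendsto_const_nhds.add htend
      exact ge_of_tendsto hten (Eventually.of_forall hd2)
    exact le_antisymm hle1 hle2
  -- the law of Ψ is μ
  have hmapΨ : ν.map Ψ = μ := by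
    haveI : IsProbabilityMeasure (ν.map Ψ) := Measure.isProbabilityMeasure_map hΨm.aemeasurable
    refine measure_ext_windows ?_
    intro n S hS
    have hSm : MeasurableSet S := windowSigma_le_pi n _ hS
    rw [Measure.map_apply hΨm hSm]
    have e1 : ∀ i, ν (Ψ ⁻¹' S) = ρ i (jsnd ⁻¹' (Ψ ⁻¹' S)) := by
      intro i
      rw [← hρG' i, Measure.map_apply measurable_jsnd (hΨm hSm)]
    have e2 : ∀ i, μ S = ρ i (jfst ⁻¹' S) := by
      intro i
      rw [← hρF' i, Measure.map_apply measurable_jfst hSm]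
    have hd1 : ∀ i, ν (Ψ ⁻¹' S) ≤ μ S
        + ((Finset.Icc (-(n : ℤ)) (n : ℤ)).card : ℝ≥0∞) * ν {ω | π' i ω 0 = none} := by
      intro i
      rw [e1 i, e2 i]
      have hincl : jsnd ⁻¹' (Ψ ⁻¹' S) ⊆ jfst ⁻¹' S
          ∪ {ω : ℤ → (A × A') × B |
              ¬ ∀ k : ℤ, -(n : ℤ) ≤ k → k ≤ (n : ℤ) → Ψ (jsnd ω) k = jfst ω k} := by
        intro ω hω
        by_cases hk : ∀ k : ℤ, -(n : ℤ) ≤ k → k ≤ (n : ℤ) → Ψ (jsnd ω) k = jfst ω k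
        · exact Or.inl ((windowSigma_local hS (Ψ (jsnd ω)) (jfst ω) hk).mp hω)
        · exact Or.inr hk
      exact (measure_mono hincl).trans ((measure_union_le _ _).trans
        (add_le_add_right (keyW2 i n) _))
    have hd2 : ∀ i, μ S ≤ ν (Ψ ⁻¹' S)
        + ((Finset.Icc (-(n : ℤ)) (n : ℤ)).card : ℝ≥0∞) * ν {ω | π' i ω 0 = none} := by
      intro i
      rw [e1 i, e2 i]
      have hincl : jfst ⁻¹' S ⊆ jsnd ⁻¹' (Ψ ⁻¹' S)
          ∪ {ω : ℤ → (A × A') × B |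
              ¬ ∀ k : ℤ, -(n : ℤ) ≤ k → k ≤ (n : ℤ) → Ψ (jsnd ω) k = jfst ω k} := by
        intro ω hω
        by_cases hk : ∀ k : ℤ, -(n : ℤ) ≤ k → k ≤ (n : ℤ) → Ψ (jsnd ω) k = jfst ω k
        · exact Or.inl ((windowSigma_local hS (Ψ (jsnd ω)) (jfst ω) hk).mpr hω)
        · exact Or.inr hk
      exact (measure_mono hincl).trans ((measure_union_le _ _).trans
        (add_le_add_right (keyW2 i n) _))
    have htend : Tendsto (fun i => ((Finset.Icc (-(n : ℤ)) (n : ℤ)).card : ℝ≥0∞)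
        * ν {ω | π' i ω 0 = none}) atTop (nhds 0) := by
      have := ENNReal.Tendsto.const_mul hunc.2
        (Or.inr (ENNReal.natCast_ne_top (Finset.Icc (-(n : ℤ)) (n : ℤ)).card))
      simpa using this
    have hle1 : ν (Ψ ⁻¹' S) ≤ μ S := by
      have hten : Tendsto (fun i => μ S
          + ((Finset.Icc (-(n : ℤ)) (n : ℤ)).card : ℝ≥0∞) * ν {ω | π' i ω 0 = none}) atTop (nhds (μ S)) := by
        simpa using tendsto_const_nhds.add htend
      exact ge_of_tendsto hten (Eventually.of_forall hd1)
    have hle2 : μ S ≤ ν (Ψ ⁻¹' S) := by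
      have hten : Tendsto (fun i => ν (Ψ ⁻¹' S)
          + ((Finset.Icc (-(n : ℤ)) (n : ℤ)).card : ℝ≥0∞) * ν {ω | π' i ω 0 = none}) atTop (nhds (ν (Ψ ⁻¹' S))) := by
        simpa using tendsto_const_nhds.add htend
      exact ge_of_tendsto hten (Eventually.of_forall hd2)
    exact le_antisymm hle1 hle2
  -- inverse on the μ side
  obtain ⟨τΨ, hτΨwin, hτΨtop, hτΨcond⟩ := hSFΨ
  obtain ⟨τΦ, hτΦwin, hτΦtop, hτΦcond⟩ := hSFΦ
  have hinv1 : ∀ᵐ ω ∂μ, Ψ (Φ ω) = ω := by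
    have hE0m : MeasurableSet {ω : ℤ → A × B | Ψ (Φ ω) 0 ≠ ω 0} := by
      have : {ω : ℤ → A × B | Ψ (Φ ω) 0 ≠ ω 0}
          = {ω : ℤ → A × B | (fun ω : ℤ → A × B => Ψ (Φ ω) 0) ω
              = (fun ω : ℤ → A × B => ω 0) ω}ᶜ := rfl
      rw [this]
      exact (measurableSet_eq_fun_prod
        ((measurable_pi_apply 0).comp (hΨm.comp hΦm)) (measurable_pi_apply 0)).compl
    have hbound : ∀ (n : ℕ) (i : ℕ), μ {ω : ℤ → A × B | Ψ (Φ ω) 0 ≠ ω 0}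
        ≤ ((Finset.Icc (-(n : ℤ)) (n : ℤ)).card : ℝ≥0∞) * μ {ω | π i ω 0 = none}
          + (ν {y : ℤ → A' × B | ¬ τΨ y ≤ (n : ℕ∞)} + ν {ω | π' i ω 0 = none}) := by
      intro n i
      have e0 : μ {ω : ℤ → A × B | Ψ (Φ ω) 0 ≠ ω 0}
          = ρ i (jfst ⁻¹' {ω : ℤ → A × B | Ψ (Φ ω) 0 ≠ ω 0}) := by
        rw [← hρF' i, Measure.map_apply measurable_jfst hE0m]
      rw [e0]
      have hincl : jfst ⁻¹' {ω : ℤ → A × B | Ψ (Φ ω) 0 ≠ ω 0}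
          ⊆ {ω : ℤ → (A × A') × B |
                ¬ ∀ k : ℤ, -(n : ℤ) ≤ k → k ≤ (n : ℤ) → Φ (jfst ω) k = jsnd ω k}
            ∪ ({ω : ℤ → (A × A') × B | ¬ τΨ (jsnd ω) ≤ (n : ℕ∞)}
              ∪ {ω : ℤ → (A × A') × B | Ψ (jsnd ω) 0 ≠ jfst ω 0}) := by
        intro ω hω
        by_cases hk : ∀ k : ℤ, -(n : ℤ) ≤ k → k ≤ (n : ℤ) → Φ (jfst ω) k = jsnd ω k
        · by_cases hτ : τΨ (jsnd ω) ≤ (n : ℕ∞)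
          · refine Or.inr (Or.inr ?_)
            intro heq
            apply hω
            have hSc : MeasurableSet[windowSigma (A' × B) n]
                ({y : ℤ → A' × B | Ψ y 0 ∈ ({Ψ (jsnd ω) 0} : Set (A × B))}
                  ∩ {y | τΨ y ≤ (n : ℕ∞)}) :=
              hτΨcond {Ψ (jsnd ω) 0} (measurableSet_singleton _) n
            have hmem : jsnd ω ∈ ({y : ℤ → A' × B | Ψ y 0 ∈ ({Ψ (jsnd ω) 0} : Set (A × B))}
                ∩ {y | τΨ y ≤ (n : ℕ∞)}) := ⟨rfl, hτ⟩
            have hagree : ∀ k : ℤ, -(n : ℤ) ≤ k → k ≤ (n : ℤ) → jsnd ω k = Φ (jfst ω) k :=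
              fun k h1 h2 => (hk k h1 h2).symm
            have := (windowSigma_local hSc (jsnd ω) (Φ (jfst ω)) hagree).mp hmem
            have hval : Ψ (Φ (jfst ω)) 0 = Ψ (jsnd ω) 0 := this.1
            show Ψ (Φ (jfst ω)) 0 = jfst ω 0
            rw [hval, heq]
          · exact Or.inr (Or.inl hτ)
        · exact Or.inl hk
      calc ρ i (jfst ⁻¹' {ω : ℤ → A × B | Ψ (Φ ω) 0 ≠ ω 0})
          ≤ ρ i {ω : ℤ → (A × A') × B |
                ¬ ∀ k : ℤ, -(n : ℤ) ≤ k → k ≤ (n : ℤ) → Φ (jfst ω) k = jsnd ω k}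
            + (ρ i {ω : ℤ → (A × A') × B | ¬ τΨ (jsnd ω) ≤ (n : ℕ∞)}
              + ρ i {ω : ℤ → (A × A') × B | Ψ (jsnd ω) 0 ≠ jfst ω 0}) :=
            (measure_mono hincl).trans ((measure_union_le _ _).trans
              (add_le_add_right (measure_union_le _ _) _))
        _ ≤ ((Finset.Icc (-(n : ℤ)) (n : ℤ)).card : ℝ≥0∞) * μ {ω | π i ω 0 = none}
            + (ν {y : ℤ → A' × B | ¬ τΨ y ≤ (n : ℕ∞)} + ν {ω | π' i ω 0 = none}) := by
            refine add_le_add (keyW1 i n) (add_le_add ?_ (key2 i 0))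
            have : {ω : ℤ → (A × A') × B | ¬ τΨ (jsnd ω) ≤ (n : ℕ∞)}
                = jsnd ⁻¹' {y : ℤ → A' × B | ¬ τΨ y ≤ (n : ℕ∞)} := rfl
            rw [this, ← hρG' i, Measure.map_apply measurable_jsnd]
            have : {y : ℤ → A' × B | ¬ τΨ y ≤ (n : ℕ∞)}
                = {y : ℤ → A' × B | τΨ y ≤ (n : ℕ∞)}ᶜ := rfl
            rw [this]
            exact (windowSigma_le_pi n _ (hτΨwin n)).compl
    have hlimn : ∀ n : ℕ, μ {ω : ℤ → A × B | Ψ (Φ ω) 0 ≠ ω 0}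
        ≤ ν {y : ℤ → A' × B | ¬ τΨ y ≤ (n : ℕ∞)} := by
      intro n
      have h1 : Tendsto (fun i => ((Finset.Icc (-(n : ℤ)) (n : ℤ)).card : ℝ≥0∞)
          * μ {ω | π i ω 0 = none}) atTop (nhds 0) := by
        have := ENNReal.Tendsto.const_mul hunc.1
          (Or.inr (ENNReal.natCast_ne_top (Finset.Icc (-(n : ℤ)) (n : ℤ)).card))
        simpa using this
      have h2 : Tendsto (fun i => ν {y : ℤ → A' × B | ¬ τΨ y ≤ (n : ℕ∞)}
          + ν {ω | π' i ω 0 = none}) atTop (nhds (ν {y : ℤ → A' × B | ¬ τΨ y ≤ (n : ℕ∞)})) := by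
        simpa using tendsto_const_nhds.add hunc.2
      have hten : Tendsto (fun i => ((Finset.Icc (-(n : ℤ)) (n : ℤ)).card : ℝ≥0∞)
          * μ {ω | π i ω 0 = none} + (ν {y : ℤ → A' × B | ¬ τΨ y ≤ (n : ℕ∞)}
            + ν {ω | π' i ω 0 = none})) atTop
          (nhds (ν {y : ℤ → A' × B | ¬ τΨ y ≤ (n : ℕ∞)})) := by
        simpa using h1.add h2
      exact ge_of_tendsto hten (Eventually.of_forall (hbound n))
    have hτtail : Tendsto (fun n : ℕ => ν {y : ℤ → A' × B | ¬ τΨ y ≤ (n : ℕ∞)}) atTop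
        (nhds 0) := by
      have hmeasn : ∀ n : ℕ, NullMeasurableSet {y : ℤ → A' × B | ¬ τΨ y ≤ (n : ℕ∞)} ν := by
        intro n
        have : {y : ℤ → A' × B | ¬ τΨ y ≤ (n : ℕ∞)}
            = {y : ℤ → A' × B | τΨ y ≤ (n : ℕ∞)}ᶜ := rfl
        rw [this]
        exact ((windowSigma_le_pi n _ (hτΨwin n)).compl).nullMeasurableSet
      have hanti : Antitone (fun n : ℕ => {y : ℤ → A' × B | ¬ τΨ y ≤ (n : ℕ∞)}) := by
        intro n m hnm y hy
        simp only [Set.mem_setOf_eq] at hy ⊢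
        intro hle
        exact hy (hle.trans (by exact_mod_cast Nat.cast_le.mpr hnm))
      have hfin' : ∃ n : ℕ, ν {y : ℤ → A' × B | ¬ τΨ y ≤ (n : ℕ∞)} ≠ ⊤ :=
        ⟨0, measure_ne_top ν _⟩
      have := tendsto_measure_iInter_atTop hmeasn hanti hfin'
      have hiI : (⋂ n : ℕ, {y : ℤ → A' × B | ¬ τΨ y ≤ (n : ℕ∞)})
          = {y : ℤ → A' × B | τΨ y = ⊤} := by
        ext y
        simp only [Set.mem_iInter, Set.mem_setOf_eq]
        constructor
        · intro h
          by_contra hc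
          obtain ⟨m, hm⟩ := WithTop.ne_top_iff_exists.mp hc
          exact h m (le_of_eq hm.symm)
        · intro h m
          rw [h]
          simp
      rw [hiI, hτΨtop] at this
      exact this
    have hE00 : μ {ω : ℤ → A × B | Ψ (Φ ω) 0 ≠ ω 0} = 0 := by
      refine le_antisymm ?_ zero_le
      exact ge_of_tendsto hτtail (Eventually.of_forall hlimn)
    -- propagate to all coordinates
    have hcomp : ∀ x, Ψ (Φ (zshift x)) = zshift (Ψ (Φ x)) := by
      intro x
      rw [hΦeq, hΨeq]
    have hEk : ∀ k : ℤ, μ {ω : ℤ → A × B | Ψ (Φ ω) k ≠ ω k} = 0 := by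
      intro k
      have hset : {ω : ℤ → A × B | Ψ (Φ ω) k ≠ ω k}
          = shiftBy k ⁻¹' {ω : ℤ → A × B | Ψ (Φ ω) 0 ≠ ω 0} := by
        ext ω
        simp only [Set.mem_setOf_eq, Set.mem_preimage]
        have hsh : Ψ (Φ (shiftBy k ω)) = shiftBy k (Ψ (Φ ω)) :=
          shift_eqv_all_exact (f := fun x => Ψ (Φ x)) hcomp k ω
        rw [hsh]
        have e1 : shiftBy k (Ψ (Φ ω)) 0 = Ψ (Φ ω) k := by simp [shiftBy]
        have e2 : shiftBy k ω 0 = ω k := by simp [shiftBy]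
        rw [e1, e2]
      rw [hset, measure_shiftBy_preimage hμinv k hE0m, hE00]
    have : ∀ᵐ ω ∂μ, ∀ k : ℤ, Ψ (Φ ω) k = ω k := by
      rw [ae_all_iff]
      intro k
      rw [ae_iff]
      exact hEk k
    filter_upwards [this] with ω h
    exact funext h
  -- inverse on the ν side
  have hinv2 : ∀ᵐ ω ∂ν, Φ (Ψ ω) = ω := by
    have hE0m : MeasurableSet {ω : ℤ → A' × B | Φ (Ψ ω) 0 ≠ ω 0} := by
      have : {ω : ℤ → A' × B | Φ (Ψ ω) 0 ≠ ω 0}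
          = {ω : ℤ → A' × B | (fun ω : ℤ → A' × B => Φ (Ψ ω) 0) ω
              = (fun ω : ℤ → A' × B => ω 0) ω}ᶜ := rfl
      rw [this]
      exact (measurableSet_eq_fun_prod
        ((measurable_pi_apply 0).comp (hΦm.comp hΨm)) (measurable_pi_apply 0)).compl
    have hbound : ∀ (n : ℕ) (i : ℕ), ν {ω : ℤ → A' × B | Φ (Ψ ω) 0 ≠ ω 0}
        ≤ ((Finset.Icc (-(n : ℤ)) (n : ℤ)).card : ℝ≥0∞) * ν {ω | π' i ω 0 = none}
          + (μ {y : ℤ → A × B | ¬ τΦ y ≤ (n : ℕ∞)} + μ {ω | π i ω 0 = none}) := by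
      intro n i
      have e0 : ν {ω : ℤ → A' × B | Φ (Ψ ω) 0 ≠ ω 0}
          = ρ i (jsnd ⁻¹' {ω : ℤ → A' × B | Φ (Ψ ω) 0 ≠ ω 0}) := by
        rw [← hρG' i, Measure.map_apply measurable_jsnd hE0m]
      rw [e0]
      have hincl : jsnd ⁻¹' {ω : ℤ → A' × B | Φ (Ψ ω) 0 ≠ ω 0}
          ⊆ {ω : ℤ → (A × A') × B |
                ¬ ∀ k : ℤ, -(n : ℤ) ≤ k → k ≤ (n : ℤ) → Ψ (jsnd ω) k = jfst ω k}
            ∪ ({ω : ℤ → (A × A') × B | ¬ τΦ (jfst ω) ≤ (n : ℕ∞)}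
              ∪ {ω : ℤ → (A × A') × B | Φ (jfst ω) 0 ≠ jsnd ω 0}) := by
        intro ω hω
        by_cases hk : ∀ k : ℤ, -(n : ℤ) ≤ k → k ≤ (n : ℤ) → Ψ (jsnd ω) k = jfst ω k
        · by_cases hτ : τΦ (jfst ω) ≤ (n : ℕ∞)
          · refine Or.inr (Or.inr ?_)
            intro heq
            apply hω
            have hSc : MeasurableSet[windowSigma (A × B) n]
                ({y : ℤ → A × B | Φ y 0 ∈ ({Φ (jfst ω) 0} : Set (A' × B))}
                  ∩ {y | τΦ y ≤ (n : ℕ∞)}) :=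
              hτΦcond {Φ (jfst ω) 0} (measurableSet_singleton _) n
            have hmem : jfst ω ∈ ({y : ℤ → A × B | Φ y 0 ∈ ({Φ (jfst ω) 0} : Set (A' × B))}
                ∩ {y | τΦ y ≤ (n : ℕ∞)}) := ⟨rfl, hτ⟩
            have hagree : ∀ k : ℤ, -(n : ℤ) ≤ k → k ≤ (n : ℤ) → jfst ω k = Ψ (jsnd ω) k :=
              fun k h1 h2 => (hk k h1 h2).symm
            have := (windowSigma_local hSc (jfst ω) (Ψ (jsnd ω)) hagree).mp hmem
            have hval : Φ (Ψ (jsnd ω)) 0 = Φ (jfst ω) 0 := this.1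
            show Φ (Ψ (jsnd ω)) 0 = jsnd ω 0
            rw [hval, heq]
          · exact Or.inr (Or.inl hτ)
        · exact Or.inl hk
      calc ρ i (jsnd ⁻¹' {ω : ℤ → A' × B | Φ (Ψ ω) 0 ≠ ω 0})
          ≤ ρ i {ω : ℤ → (A × A') × B |
                ¬ ∀ k : ℤ, -(n : ℤ) ≤ k → k ≤ (n : ℤ) → Ψ (jsnd ω) k = jfst ω k}
            + (ρ i {ω : ℤ → (A × A') × B | ¬ τΦ (jfst ω) ≤ (n : ℕ∞)}
              + ρ i {ω : ℤ → (A × A') × B | Φ (jfst ω) 0 ≠ jsnd ω 0}) :=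
            (measure_mono hincl).trans ((measure_union_le _ _).trans
              (add_le_add_right (measure_union_le _ _) _))
        _ ≤ ((Finset.Icc (-(n : ℤ)) (n : ℤ)).card : ℝ≥0∞) * ν {ω | π' i ω 0 = none}
            + (μ {y : ℤ → A × B | ¬ τΦ y ≤ (n : ℕ∞)} + μ {ω | π i ω 0 = none}) := by
            refine add_le_add (keyW2 i n) (add_le_add ?_ (key1 i 0))
            have : {ω : ℤ → (A × A') × B | ¬ τΦ (jfst ω) ≤ (n : ℕ∞)}
                = jfst ⁻¹' {y : ℤ → A × B | ¬ τΦ y ≤ (n : ℕ∞)} := rfl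
            rw [this, ← hρF' i, Measure.map_apply measurable_jfst]
            have : {y : ℤ → A × B | ¬ τΦ y ≤ (n : ℕ∞)}
                = {y : ℤ → A × B | τΦ y ≤ (n : ℕ∞)}ᶜ := rfl
            rw [this]
            exact (windowSigma_le_pi n _ (hτΦwin n)).compl
    have hlimn : ∀ n : ℕ, ν {ω : ℤ → A' × B | Φ (Ψ ω) 0 ≠ ω 0}
        ≤ μ {y : ℤ → A × B | ¬ τΦ y ≤ (n : ℕ∞)} := by
      intro n
      have h1 : Tendsto (fun i => ((Finset.Icc (-(n : ℤ)) (n : ℤ)).card : ℝ≥0∞)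
          * ν {ω | π' i ω 0 = none}) atTop (nhds 0) := by
        have := ENNReal.Tendsto.const_mul hunc.2
          (Or.inr (ENNReal.natCast_ne_top (Finset.Icc (-(n : ℤ)) (n : ℤ)).card))
        simpa using this
      have h2 : Tendsto (fun i => μ {y : ℤ → A × B | ¬ τΦ y ≤ (n : ℕ∞)}
          + μ {ω | π i ω 0 = none}) atTop (nhds (μ {y : ℤ → A × B | ¬ τΦ y ≤ (n : ℕ∞)})) := by
        simpa using tendsto_const_nhds.add hunc.1
      have hten : Tendsto (fun i => ((Finset.Icc (-(n : ℤ)) (n : ℤ)).card : ℝ≥0∞)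
          * ν {ω | π' i ω 0 = none} + (μ {y : ℤ → A × B | ¬ τΦ y ≤ (n : ℕ∞)}
            + μ {ω | π i ω 0 = none})) atTop
          (nhds (μ {y : ℤ → A × B | ¬ τΦ y ≤ (n : ℕ∞)})) := by
        simpa using h1.add h2
      exact ge_of_tendsto hten (Eventually.of_forall (hbound n))
    have hτtail : Tendsto (fun n : ℕ => μ {y : ℤ → A × B | ¬ τΦ y ≤ (n : ℕ∞)}) atTop
        (nhds 0) := by
      have hmeasn : ∀ n : ℕ, NullMeasurableSet {y : ℤ → A × B | ¬ τΦ y ≤ (n : ℕ∞)} μ := by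
        intro n
        have : {y : ℤ → A × B | ¬ τΦ y ≤ (n : ℕ∞)}
            = {y : ℤ → A × B | τΦ y ≤ (n : ℕ∞)}ᶜ := rfl
        rw [this]
        exact ((windowSigma_le_pi n _ (hτΦwin n)).compl).nullMeasurableSet
      have hanti : Antitone (fun n : ℕ => {y : ℤ → A × B | ¬ τΦ y ≤ (n : ℕ∞)}) := by
        intro n m hnm y hy
        simp only [Set.mem_setOf_eq] at hy ⊢
        intro hle
        exact hy (hle.trans (by exact_mod_cast Nat.cast_le.mpr hnm))
      have hfin' : ∃ n : ℕ, μ {y : ℤ → A × B | ¬ τΦ y ≤ (n : ℕ∞)} ≠ ⊤ :=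
        ⟨0, measure_ne_top μ _⟩
      have := tendsto_measure_iInter_atTop hmeasn hanti hfin'
      have hiI : (⋂ n : ℕ, {y : ℤ → A × B | ¬ τΦ y ≤ (n : ℕ∞)})
          = {y : ℤ → A × B | τΦ y = ⊤} := by
        ext y
        simp only [Set.mem_iInter, Set.mem_setOf_eq]
        constructor
        · intro h
          by_contra hc
          obtain ⟨m, hm⟩ := WithTop.ne_top_iff_exists.mp hc
          exact h m (le_of_eq hm.symm)
        · intro h m
          rw [h]
          simp
      rw [hiI, hτΦtop] at this
      exact this
    have hE00 : ν {ω : ℤ → A' × B | Φ (Ψ ω) 0 ≠ ω 0} = 0 := by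
      refine le_antisymm ?_ zero_le
      exact ge_of_tendsto hτtail (Eventually.of_forall hlimn)
    have hcomp : ∀ x, Φ (Ψ (zshift x)) = zshift (Φ (Ψ x)) := by
      intro x
      rw [hΨeq, hΦeq]
    have hEk : ∀ k : ℤ, ν {ω : ℤ → A' × B | Φ (Ψ ω) k ≠ ω k} = 0 := by
      intro k
      have hset : {ω : ℤ → A' × B | Φ (Ψ ω) k ≠ ω k}
          = shiftBy k ⁻¹' {ω : ℤ → A' × B | Φ (Ψ ω) 0 ≠ ω 0} := by
        ext ω
        simp only [Set.mem_setOf_eq, Set.mem_preimage]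
        have hsh : Φ (Ψ (shiftBy k ω)) = shiftBy k (Φ (Ψ ω)) :=
          shift_eqv_all_exact (f := fun x => Φ (Ψ x)) hcomp k ω
        rw [hsh]
        have e1 : shiftBy k (Φ (Ψ ω)) 0 = Φ (Ψ ω) k := by simp [shiftBy]
        have e2 : shiftBy k ω 0 = ω k := by simp [shiftBy]
        rw [e1, e2]
      rw [hset, measure_shiftBy_preimage hνinv k hE0m, hE00]
    have : ∀ᵐ ω ∂ν, ∀ k : ℤ, Φ (Ψ ω) k = ω k := by
      rw [ae_all_iff]
      intro k
      rw [ae_iff]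
      exact hEk k
    filter_upwards [this] with ω h
    exact funext h
  -- assemble
  refine ⟨Φ, Ψ, ⟨⟨hΦm, Eventually.of_forall hΦeq, hmapΦ⟩, τΦ, hτΦwin, hτΦtop, hτΦcond⟩,
    ⟨⟨hΨm, Eventually.of_forall hΨeq, hmapΨ⟩, τΨ, hτΨwin, hτΨtop, hτΨcond⟩, ?_, ?_⟩
  · filter_upwards [hinv1] with ω h
    exact ⟨rfl, h⟩
  · filter_upwards [hinv2] with ω h
    exact ⟨rfl, h⟩

end

end ZP
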